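/- For any modal formula A, the contraction rules (cl_A): from Γ, A, A ⇒ Δ infer Γ, A ⇒ Δ, and (cr_A): from Γ ⇒ A, A, Δ infer Γ ⇒ A, Δ, are admissible in Grz_∞: if the premise is provable in Grz_∞ then so is the conclusion. -/

import Mathlib

/-- Modal formulas built from ⊥ and propositional variables using → and □. -/
inductive Fml : Type
  | bot : Fml
  | var : ℕ → Fml
  | imp : Fml → Fml → Fml
  | box : Fml → Fml
deriving DecidableEq

/-- A sequent `Γ ⇒ Δ`: a pair of finite multisets of formulas. -/
abbrev Sequent : Type := Multiset Fml × Multiset Fml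

/-- Tags for the inference rules of `Grz_∞ (+ cut)`. -/
inductive RuleTag : Type
  | ax | axBot | impL | impR | refl | box | cut
deriving DecidableEq

/-- Local correctness of a rule application in `Grz_∞` (cut allowed when the
Boolean parameter is `true`): it relates the conclusion sequent, the rule tag
and the (optional) first and second premises.  For the rule `(□)`, the second
premise is its right premise. -/
inductive Rules : Bool → Sequent → RuleTag → Option Sequent → Option Sequent → Prop
  | ax (c : Bool) (Γ Δ : Multiset Fml) (p : ℕ) :
      Rules c (Fml.var p ::ₘ Γ, Fml.var p ::ₘ Δ) RuleTag.ax none none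
  | axBot (c : Bool) (Γ Δ : Multiset Fml) :
      Rules c (Fml.bot ::ₘ Γ, Δ) RuleTag.axBot none none
  | impL (c : Bool) (Γ Δ : Multiset Fml) (A B : Fml) :
      Rules c (Fml.imp A B ::ₘ Γ, Δ) RuleTag.impL
        (some (B ::ₘ Γ, Δ)) (some (Γ, A ::ₘ Δ))
  | impR (c : Bool) (Γ Δ : Multiset Fml) (A B : Fml) :
      Rules c (Γ, Fml.imp A B ::ₘ Δ) RuleTag.impR
        (some (A ::ₘ Γ, B ::ₘ Δ)) none
  | refl (c : Bool) (Γ Δ : Multiset Fml) (B : Fml) :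
      Rules c (Fml.box B ::ₘ Γ, Δ) RuleTag.refl
        (some (B ::ₘ Fml.box B ::ₘ Γ, Δ)) none
  | box (c : Bool) (Γ Φ Δ : Multiset Fml) (A : Fml) :
      Rules c (Γ + Φ.map Fml.box, Fml.box A ::ₘ Δ) RuleTag.box
        (some (Γ + Φ.map Fml.box, A ::ₘ Δ)) (some (Φ.map Fml.box, ({A} : Multiset Fml)))
  | cut (Γ Δ : Multiset Fml) (A : Fml) :
      Rules true (Γ, Δ) RuleTag.cut (some (Γ, A ::ₘ Δ)) (some (A ::ₘ Γ, Δ))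

/-- An ∞-proof in `Grz_∞` (`c = false`) or `Grz_∞ + cut` (`c = true`): a
possibly infinite tree (nodes are adressed by lists of Booleans, `false`
pointing to the first premise and `true` to the second premise) of sequents
together with applied rules, constructed according to the rules, whose leaves
are initial sequents, and in which every infinite branch passes through a
right premise of the rule `(□)` infinitely many times. -/
structure InfProof (c : Bool) : Type where
  node : List Bool → Option (Sequent × RuleTag)
  root_isSome : (node []).isSome
  closed : ∀ (p : List Bool) (i : Bool), node p = none → node (p ++ [i]) = none
  correct : ∀ (p : List Bool) (s : Sequent) (r : RuleTag), node p = some (s, r) →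
    Rules c s r ((node (p ++ [false])).map Prod.fst) ((node (p ++ [true])).map Prod.fst)
  guard : ∀ f : ℕ → Bool, (∀ n : ℕ, (node ((List.range n).map f)).isSome) →
    ∀ N : ℕ, ∃ n : ℕ, N ≤ n ∧ f n = true ∧
      (node ((List.range n).map f)).map Prod.snd = some RuleTag.box

/-- The sequent at the root of an ∞-proof. -/
def rootSeq {c : Bool} (π : InfProof c) : Sequent :=
  ((π.node []).getD (((0 : Multiset Fml), (0 : Multiset Fml)), RuleTag.ax)).1

/-- A sequent is provable in `Grz_∞ (+ cut)` if it has an ∞-proof with that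
sequent at the root. -/
def ProvableInf (c : Bool) (s : Sequent) : Prop := ∃ π : InfProof c, rootSeq π = s

/-- The number of right premises of the rule `(□)` strictly below the node
addressed by `p` in the ∞-proof `π`. -/
def countBR {c : Bool} (π : InfProof c) (p : List Bool) : ℕ :=
  ((List.range p.length).filter fun i =>
    p.getD i false && decide ((π.node (p.take i)).map Prod.snd = some RuleTag.box)).length

/-- `Frag n π τ` means that the `n`-fragments of `π` and `τ` coincide
(`π ∼_n τ`): the trees agree on every node lying strictly before the `n`-th
right premise of `(□)` on its branch. -/
def Frag {c : Bool} (n : ℕ) (π τ : InfProof c) : Prop :=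
  ∀ p : List Bool, countBR π p < n → π.node p = τ.node p

/-- The local pheight `|π|`: the length of the longest branch in the main
(1-)fragment of `π`. -/
noncomputable def pheight {c : Bool} (π : InfProof c) : ℕ :=
  sSup { n : ℕ | ∃ p : List Bool, p.length = n ∧ (π.node p).isSome ∧ countBR π p = 0 }

/-- Membership in `P_n`: the ∞-proof contains no applications of the cut rule
in its `n`-fragment. -/
def CutFreeIn {c : Bool} (n : ℕ) (π : InfProof c) : Prop :=
  ∀ p : List Bool, countBR π p < n → (π.node p).map Prod.snd ≠ some RuleTag.cut

/-- A non-expansive mapping on ∞-proofs. -/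
def NonExp {c : Bool} (u : InfProof c → InfProof c) : Prop :=
  ∀ (n : ℕ) (π π' : InfProof c), Frag n π π' → Frag n (u π) (u π')

/-- An adequate mapping on ∞-proofs: it preserves each `P_n`. -/
def Adequate {c : Bool} (u : InfProof c → InfProof c) : Prop :=
  ∀ (n : ℕ) (π : InfProof c), CutFreeIn n π → CutFreeIn n (u π)

/-! ### Auxiliary material -/

namespace GrzAux

open Multiset

lemma erase_cons_of_mem {x a : Fml} {s : Multiset Fml} (h : a ∈ s) :
    (x ::ₘ s).erase a = x ::ₘ s.erase a := by
  rcases eq_or_ne x a with rfl | hne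
  · rw [Multiset.erase_cons_head, Multiset.cons_erase h]
  · rw [Multiset.erase_cons_tail _ hne]

lemma box_inj : Function.Injective Fml.box := by
  intro a b h; cases h; rfl

lemma mem_of_two_le_count {a : Fml} {s : Multiset Fml} (h : 2 ≤ count a s) : a ∈ s := by
  by_contra hc
  rw [Multiset.count_eq_zero_of_notMem hc] at h; omega

lemma mem_erase_of_two_le_count {a : Fml} {s : Multiset Fml} (h : 2 ≤ count a s) :
    a ∈ s.erase a := by
  have : 1 ≤ count a (s.erase a) := by
    rw [Multiset.count_erase_self]; omega
  exact Multiset.count_pos.mp (by omega)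

/-- Ancestors of a `some` node are `some`. -/
lemma node_isSome_of_append {c : Bool} (π : InfProof c) (p r : List Bool)
    (h : (π.node (p ++ r)).isSome) : (π.node p).isSome := by
  induction r using List.reverseRecOn with
  | nil => simpa using h
  | append_singleton r i ih =>
    apply ih
    by_contra hc
    have h0 : π.node (p ++ r) = none := by
      cases hn : π.node (p ++ r) with
      | none => rfl
      | some v => exact absurd (by rw [hn]; rfl) hc
    have := π.closed (p ++ r) i h0
    rw [← List.append_assoc] at h
    rw [this] at h
    simp at h

lemma rootSeq_eq {c : Bool} (π : InfProof c) {s : Sequent} {r : RuleTag}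
    (h : π.node [] = some (s, r)) : rootSeq π = s := by
  unfold rootSeq; rw [h]; rfl

/-- A trivial one-node proof. -/
noncomputable def axProof : InfProof false where
  node p := if p = [] then some ((Fml.var 0 ::ₘ 0, Fml.var 0 ::ₘ 0), RuleTag.ax) else none
  root_isSome := by simp
  closed p i h := by simp
  correct p s r h := by
    by_cases hp : p = []
    · subst hp
      rw [show ((if ([]:List Bool) = [] then some ((Fml.var 0 ::ₘ 0, Fml.var 0 ::ₘ 0), RuleTag.ax) else none)) = some ((Fml.var 0 ::ₘ 0, Fml.var 0 ::ₘ 0), RuleTag.ax) from if_pos rfl, Option.some_inj] at h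
      obtain ⟨hs, hr⟩ := Prod.mk.inj h.symm
      subst hs; subst hr
      simp only [List.nil_append]
      have h1 : ¬ ([false] : List Bool) = [] := by simp
      have h2 : ¬ ([true] : List Bool) = [] := by simp
      rw [if_neg h1, if_neg h2]
      exact Rules.ax false 0 0 0
    · rw [show ((if p = [] then some ((Fml.var 0 ::ₘ 0, Fml.var 0 ::ₘ 0), RuleTag.ax) else none)) = none from if_neg hp] at h
      exact absurd h (by simp)
  guard f hf N := by
    exfalso
    have := hf 1
    simp [List.range_succ] at this

/-- The subtree of an ∞-proof at an address with a `some` node. -/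
noncomputable def subProof {c : Bool} (π : InfProof c) (q : List Bool)
    (h : (π.node q).isSome) : InfProof c where
  node p := π.node (q ++ p)
  root_isSome := by simpa using h
  closed p i h' := by
    show π.node (q ++ (p ++ [i])) = none
    rw [← List.append_assoc]
    exact π.closed (q ++ p) i h'
  correct p s r h' := by
    have := π.correct (q ++ p) s r h'
    simpa [List.append_assoc] using this
  guard f hf N := by
    classical
    set g : ℕ → Bool := fun n => if hn : n < q.length then q.get ⟨n, hn⟩ else f (n - q.length) with hg
    have key : ∀ m : ℕ, (List.range (q.length + m)).map g = q ++ (List.range m).map f := by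
      intro m
      rw [List.range_add, List.map_append]
      congr 1
      · apply List.ext_get (by simp)
        intro n h1 h2
        simp only [List.get_eq_getElem, List.getElem_map, List.getElem_range]
        simp only [List.length_map, List.length_range] at h1
        rw [hg]; simp [h1]
      · apply List.ext_get (by simp)
        intro n h1 h2
        simp only [List.get_eq_getElem, List.getElem_map, List.getElem_range]
        simp only [List.length_map, List.length_range] at h1
        rw [hg]; simp
    have key2 : ∀ n : ℕ, n ≤ q.length → (List.range n).map g = q.take n := by
      intro n hn
      apply List.ext_get (by simp [hn])
      intro k h1 h2
      simp only [List.length_map, List.length_range] at h1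
      simp only [List.get_eq_getElem, List.getElem_map, List.getElem_range, List.getElem_take]
      rw [hg]; simp [lt_of_lt_of_le h1 hn]
    have hsome : ∀ n : ℕ, (π.node ((List.range n).map g)).isSome := by
      intro n
      rcases le_or_gt n q.length with hn | hn
      · rw [key2 n hn]
        have : q = q.take n ++ q.drop n := by simp
        rw [this] at h
        exact node_isSome_of_append π _ _ h
      · have : n = q.length + (n - q.length) := by omega
        rw [this, key]
        exact hf _
    obtain ⟨n, hn1, hn2, hn3⟩ := π.guard g hsome (q.length + N)
    refine ⟨n - q.length, by omega, ?_, ?_⟩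
    · have : g n = f (n - q.length) := by rw [hg]; simp only [dif_neg (by omega : ¬ n < q.length)]
      rw [← this]; exact hn2
    · have : n = q.length + (n - q.length) := by omega
      rw [this, key] at hn3
      exact hn3

lemma subProof_rootSeq {c : Bool} (π : InfProof c) (q : List Bool)
    (h : (π.node q).isSome) {s : Sequent} {r : RuleTag} (hq : π.node q = some (s, r)) :
    rootSeq (subProof π q h) = s := by
  apply rootSeq_eq
  show π.node (q ++ []) = _
  simpa using hq

lemma provable_sub {c : Bool} (π : InfProof c) (q : List Bool)
    {s : Sequent} {r : RuleTag} (hq : π.node q = some (s, r)) :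
    ProvableInf c s :=
  ⟨subProof π q (by rw [hq]; rfl), subProof_rootSeq π q _ hq⟩

end GrzAux
namespace GrzAux

/-! ### The active-region predicate -/

def actOf (E : List Bool → Bool → Prop) (p : List Bool) : Prop :=
  ∀ q i r, p = q ++ i :: r → E q i

variable {E : List Bool → Bool → Prop}

lemma actOf_nil : actOf E [] := by
  intro q i r h; exact absurd h (by simp)

lemma actOf_concat (p : List Bool) (i : Bool) :
    actOf E (p ++ [i]) ↔ actOf E p ∧ E p i := by
  constructor
  · intro h
    exact ⟨fun q j r hq => h q j (r ++ [i]) (by rw [hq]; simp), h p i [] rfl⟩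
  · rintro ⟨h1, h2⟩ q j r hq
    rcases List.eq_nil_or_concat r with rfl | ⟨r', k, rfl⟩
    · obtain ⟨hpq, hij⟩ := List.append_inj' hq rfl
      obtain rfl : i = j := by simpa using hij
      exact hpq ▸ h2
    · rw [List.concat_eq_append, show q ++ j :: (r' ++ [k]) = (q ++ j :: r') ++ [k] by simp] at hq
      obtain ⟨hpq, hik⟩ := List.append_inj' hq rfl
      exact h1 q j r' hpq

lemma actOf_take {p : List Bool} (h : actOf E p) (n : ℕ) : actOf E (p.take n) := by
  intro q i r hq
  apply h q i (r ++ p.drop n)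
  conv_lhs => rw [← List.take_append_drop n p]
  rw [hq]; simp

/-! ### The oracle -/

open Classical in
noncomputable def orc (spec : List Bool → Bool → Option Sequent) (p : List Bool) (i : Bool) :
    InfProof false :=
  if h : ∃ s', spec p i = some s' ∧ ProvableInf false s' then h.choose_spec.2.choose else axProof

lemma orc_rootSeq {spec : List Bool → Bool → Option Sequent} {p : List Bool} {i : Bool}
    {s' : Sequent} (h1 : spec p i = some s') (h2 : ProvableInf false s') :
    rootSeq (orc spec p i) = s' := by
  have hex : ∃ s'', spec p i = some s'' ∧ ProvableInf false s'' := ⟨s', h1, h2⟩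
  rw [orc, dif_pos hex]
  have heq : hex.choose = s' := Option.some_inj.mp (hex.choose_spec.1.symm.trans h1)
  exact hex.choose_spec.2.choose_spec.trans heq

/-! ### The generic transformation -/

section Build

variable (π : InfProof false) (T : Sequent → Sequent)
  (E : List Bool → Bool → Prop) (spec : List Bool → Bool → Option Sequent)

open Classical in
noncomputable def bnum (p : List Bool) (h : ¬ actOf E p) : ℕ :=
  Nat.find (⟨p.length, by simpa using h⟩ : ∃ n, ¬ actOf E (p.take n))

open Classical in
noncomputable def newNode (p : List Bool) : Option (Sequent × RuleTag) :=
  if h : actOf E p then (π.node p).map (fun x => (T x.1, x.2))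
  else
    let n := bnum E p h
    if (π.node (p.take n)).isSome then
      (orc spec (p.take (n - 1)) (p.getD (n - 1) false)).node (p.drop n)
    else none

lemma newNode_act {p : List Bool} (h : actOf E p) :
    newNode π T E spec p = (π.node p).map (fun x => (T x.1, x.2)) := by
  rw [newNode, dif_pos h]

/-- Value of `newNode` on the subtree hanging below an exit edge. -/
lemma newNode_exit {p : List Bool} {i : Bool} (hp : actOf E p) (hEi : ¬ E p i) (r : List Bool) :
    newNode π T E spec (p ++ [i] ++ r) =
      if (π.node (p ++ [i])).isSome then (orc spec p i).node r else none := by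
  classical
  have hnot : ¬ actOf E (p ++ [i] ++ r) := by
    intro h
    have := actOf_take h (p.length + 1)
    rw [show (p ++ [i] ++ r).take (p.length + 1) = p ++ [i] by
      rw [List.append_assoc]
      rw [show p.length + 1 = (p ++ [i]).length by simp, ← List.append_assoc]
      exact List.take_left] at this
    exact hEi ((actOf_concat p i).mp this).2
  have hbn : bnum E (p ++ [i] ++ r) hnot = p.length + 1 := by
    rw [bnum, Nat.find_eq_iff]
    constructor
    · rw [show (p ++ [i] ++ r).take (p.length + 1) = p ++ [i] by
        rw [show p.length + 1 = (p ++ [i]).length by simp]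
        exact List.take_left]
      rw [actOf_concat]
      tauto
    · intro m hm
      rw [not_not]
      rw [List.append_assoc, List.take_append_of_le_length (by omega)]
      exact actOf_take hp m
  rw [newNode, dif_neg hnot]
  simp only [hbn]
  have htake : (p ++ [i] ++ r).take (p.length + 1) = p ++ [i] := by
    rw [show p.length + 1 = (p ++ [i]).length by simp]
    exact List.take_left
  have htake' : (p ++ [i] ++ r).take (p.length + 1 - 1) = p := by
    simp only [Nat.add_sub_cancel]
    rw [List.append_assoc, List.take_append_of_le_length (le_refl _), List.take_length]
  have hget : (p ++ [i] ++ r).getD (p.length + 1 - 1) false = i := by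
    simp only [Nat.add_sub_cancel]
    rw [List.append_assoc, List.getD_append_right p ([i] ++ r) false p.length (le_refl _)]
    simp
  have hdrop : (p ++ [i] ++ r).drop (p.length + 1) = r := by
    rw [show p.length + 1 = (p ++ [i]).length by simp]
    exact List.drop_left
  rw [htake, htake', hget, hdrop]

/-- Decomposition of a non-active address. -/
lemma newNode_dec {p : List Bool} (hp : ¬ actOf E p) :
    ∃ q i r, p = q ++ [i] ++ r ∧ actOf E q ∧ ¬ E q i := by
  classical
  have hex : ∃ k, ¬ actOf E (p.take k) := ⟨p.length, by simpa using hp⟩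
  set n := Nat.find hex with hn
  have h1 : ¬ actOf E (p.take n) := Nat.find_spec hex
  have h2 : ∀ m, m < n → actOf E (p.take m) := by
    intro m hm
    have := Nat.find_min hex hm
    rwa [not_not] at this
  have hnpos : 1 ≤ n := by
    rcases Nat.eq_zero_or_pos n with h | h
    · exfalso; apply h1; rw [h]; exact actOf_nil
    · exact h
  have hnle : n ≤ p.length := Nat.find_le (by simpa using hp)

  have hlt : n - 1 < p.length := by omega
  have hsome : p[n-1]? = some (p.getD (n-1) false) := by
    rw [List.getElem?_eq_getElem hlt, List.getD_eq_getElem _ _ hlt]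
  have htake : p.take n = p.take (n - 1) ++ [p.getD (n - 1) false] := by
    conv_lhs => rw [show n = (n - 1) + 1 by omega]
    rw [List.take_succ, hsome]
    rfl
  refine ⟨p.take (n - 1), p.getD (n - 1) false, p.drop n, ?_, h2 _ (by omega), ?_⟩
  · rw [← htake, List.take_append_drop]
  · intro hEq
    apply h1
    rw [htake, actOf_concat]
    exact ⟨h2 _ (by omega), hEq⟩

variable
  (hE : ∀ p i, E p i → (π.node (p ++ [i])).isSome)
  (hiso : ∀ p i, actOf E p → (π.node p).isSome → ((spec p i).isSome ↔ (π.node (p ++ [i])).isSome))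
  (hact : ∀ p i s_c r_c, actOf E p → E p i → π.node (p ++ [i]) = some (s_c, r_c) →
      spec p i = some (T s_c))
  (horc : ∀ p i s', actOf E p → ¬ E p i → (π.node (p ++ [i])).isSome → spec p i = some s' →
      ProvableInf false s')
  (hrules : ∀ p s r, actOf E p → π.node p = some (s, r) →
      Rules false (T s) r (spec p false) (spec p true))

include hE hiso hact horc hrules in
lemma build : ProvableInf false (T (rootSeq π)) := by
  classical
  -- the children of an active node, as needed for `correct`
  have hchild : ∀ p i, actOf E p → (π.node p).isSome →
      (newNode π T E spec (p ++ [i])).map Prod.fst = spec p i := by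
    intro p i hp hps
    by_cases hEi : E p i
    · have hsome := hE p i hEi
      obtain ⟨⟨s_c, r_c⟩, hc⟩ := Option.isSome_iff_exists.mp hsome
      have hacti : actOf E (p ++ [i]) := (actOf_concat p i).mpr ⟨hp, hEi⟩
      rw [newNode_act π T E spec hacti, hc, hact p i s_c r_c hp hEi hc]
      rfl
    · have := newNode_exit π T E spec hp hEi []
      rw [List.append_nil] at this
      rw [this]
      by_cases hsome : (π.node (p ++ [i])).isSome
      · rw [if_pos hsome]
        have hspec : (spec p i).isSome := (hiso p i hp hps).mpr hsome
        obtain ⟨s', hs'⟩ := Option.isSome_iff_exists.mp hspec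
        have hprov := horc p i s' hp hEi hsome hs'
        have hroot := orc_rootSeq hs' hprov
        obtain ⟨⟨s'', r''⟩, hs''⟩ := Option.isSome_iff_exists.mp (orc spec p i).root_isSome
        rw [hs'']
        have : s'' = s' := by rw [← hroot]; exact (rootSeq_eq _ hs'').symm
        rw [hs', this]
        rfl
      · rw [if_neg hsome]
        rw [Option.not_isSome_iff_eq_none] at hsome
        have : spec p i = none := by
          rcases hs : spec p i with _ | s'
          · rfl
          · exact absurd ((hiso p i hp hps).mp (by rw [hs]; rfl)) (by rw [hsome]; simp)
        rw [this]
        rfl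
  refine ⟨⟨newNode π T E spec, ?_, ?_, ?_, ?_⟩, ?_⟩
  · -- root_isSome
    rw [newNode_act π T E spec actOf_nil]
    simpa using π.root_isSome
  · -- closed
    intro p i h
    by_cases hp : actOf E p
    · rw [newNode_act π T E spec hp] at h
      have hnone : π.node p = none := by
        rcases hn : π.node p with _ | v
        · rfl
        · rw [hn] at h; exact absurd h (by simp)
      have hcnone : π.node (p ++ [i]) = none := π.closed p i hnone
      by_cases hEi : E p i
      · exact absurd (hE p i hEi) (by rw [hcnone]; simp)
      · have := newNode_exit π T E spec hp hEi []
        rw [List.append_nil] at this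
        rw [this, if_neg (by rw [hcnone]; simp)]
    · obtain ⟨q, j, r, rfl, hq, hEj⟩ := newNode_dec E hp
      rw [newNode_exit π T E spec hq hEj r] at h
      rw [show q ++ [j] ++ r ++ [i] = q ++ [j] ++ (r ++ [i]) by simp,
        newNode_exit π T E spec hq hEj (r ++ [i])]
      by_cases hsome : (π.node (q ++ [j])).isSome
      · rw [if_pos hsome] at h ⊢
        exact (orc spec q j).closed r i h
      · rw [if_neg hsome]
  · -- correct
    intro p s r h
    by_cases hp : actOf E p
    · rw [newNode_act π T E spec hp] at h
      rcases hn : π.node p with _ | ⟨s₀, r₀⟩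
      · rw [hn] at h; exact absurd h (by simp)
      · rw [hn] at h
        simp only [Option.map_some] at h
        obtain ⟨hs, hr⟩ := Prod.mk.inj (Option.some_inj.mp h)
        subst hs; subst hr
        rw [hchild p false hp (by rw [hn]; rfl), hchild p true hp (by rw [hn]; rfl)]
        exact hrules p s₀ r₀ hp hn
    · obtain ⟨q, j, r', rfl, hq, hEj⟩ := newNode_dec E hp
      rw [newNode_exit π T E spec hq hEj r'] at h
      by_cases hsome : (π.node (q ++ [j])).isSome
      · rw [if_pos hsome] at h
        have hcor := (orc spec q j).correct r' s r h
        rw [show q ++ [j] ++ r' ++ [false] = q ++ [j] ++ (r' ++ [false]) by simp,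
          show q ++ [j] ++ r' ++ [true] = q ++ [j] ++ (r' ++ [true]) by simp,
          newNode_exit π T E spec hq hEj (r' ++ [false]),
          newNode_exit π T E spec hq hEj (r' ++ [true]),
          if_pos hsome, if_pos hsome]
        exact hcor
      · rw [if_neg hsome] at h
        exact absurd h (by simp)
  · -- guard
    intro f hf N
    by_cases hAll : ∀ n, actOf E ((List.range n).map f)
    · have hsome : ∀ n, (π.node ((List.range n).map f)).isSome := by
        intro n
        have := hf n
        rw [newNode_act π T E spec (hAll n)] at this
        exact Option.isSome_map ▸ this
      obtain ⟨n, hn1, hn2, hn3⟩ := π.guard f hsome N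
      refine ⟨n, hn1, hn2, ?_⟩
      rw [newNode_act π T E spec (hAll n)]
      rcases hn : π.node ((List.range n).map f) with _ | ⟨s₀, r₀⟩
      · rw [hn] at hn3; exact absurd hn3 (by simp)
      · rw [hn] at hn3
        simp only [Option.map_some] at hn3 ⊢
        exact hn3
    · push_neg at hAll
      obtain ⟨n₀, hn₀⟩ := hAll
      obtain ⟨q, j, r₀, hdec, hq, hEj⟩ := newNode_dec E hn₀
      set m := q.length with hm
      -- q ++ [j] is a prefix of the branch, so j = f m and q = (range m).map f
      have hmlt : m + 1 ≤ n₀ := by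
        have := congrArg List.length hdec
        simp [hm] at this ⊢
        omega
      have hqpath : q = (List.range m).map f := by
        have h1 : ((List.range n₀).map f).take m = (List.range m).map f := by
          rw [← List.map_take, List.take_range, min_eq_left (by omega)]
        rw [← h1, hdec, List.append_assoc, List.take_append_of_le_length (le_refl _),
          List.take_length]
      have hjf : j = f m := by
        have h1 : ((List.range n₀).map f).getD m false = f m := by
          rw [List.getD_eq_getElem _ _ (by simpa using by omega : m < ((List.range n₀).map f).length)]
          simp
        rw [hdec, List.append_assoc,
          List.getD_append_right q ([j] ++ r₀) false m (le_of_eq hm)] at h1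
        rw [show m - q.length = 0 by omega] at h1
        simpa using h1
      have hpath : ∀ k, (List.range (m + 1 + k)).map f =
          q ++ [j] ++ (List.range k).map (fun x => f (m + 1 + x)) := by
        intro k
        have h2 : (List.range (m + 1)).map f = q ++ [j] := by
          rw [List.range_succ, List.map_append, hqpath, hjf]
          rfl
        rw [List.range_add, List.map_append, List.map_map, h2]
        rfl
      have hsome1 : (π.node (q ++ [j])).isSome := by
        have := hf (m + 1)
        rw [show (List.range (m + 1)).map f = q ++ [j] ++ [] by rw [List.append_nil]; simpa using hpath 0,
          newNode_exit π T E spec hq hEj []] at this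
        by_contra hc
        rw [if_neg hc] at this
        exact absurd this (by simp)
      set t := orc spec q j with ht
      set g : ℕ → Bool := fun x => f (m + 1 + x) with hg
      have htnode : ∀ k, t.node ((List.range k).map g) =
          newNode π T E spec ((List.range (m + 1 + k)).map f) := by
        intro k
        rw [hpath k, newNode_exit π T E spec hq hEj _, if_pos hsome1]
      have htf : ∀ k, (t.node ((List.range k).map g)).isSome := by
        intro k; rw [htnode k]; exact hf _
      obtain ⟨k, hk1, hk2, hk3⟩ := t.guard g htf N
      refine ⟨m + 1 + k, by omega, hk2, ?_⟩
      rw [← htnode k]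
      exact hk3
  · -- root sequent
    obtain ⟨⟨s₀, r₀⟩, h₀⟩ := Option.isSome_iff_exists.mp π.root_isSome
    apply rootSeq_eq (r := r₀)
    show newNode π T E spec [] = _
    rw [newNode_act π T E spec actOf_nil, h₀, rootSeq_eq π h₀]
    rfl

end Build

end GrzAux
namespace GrzAux

open Multiset

lemma cnt_erase (x a : Fml) (s : Multiset Fml) :
    count x (s.erase a) = count x s - (if x = a then 1 else 0) := by
  rcases eq_or_ne x a with rfl | h
  · simp [Multiset.count_erase_self]
  · simp [Multiset.count_erase_of_ne h, h]

lemma map_fst_some {o : Option (Sequent × RuleTag)} {v : Sequent}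
    (h : o.map Prod.fst = some v) : ∃ rc, o = some (v, rc) := by
  rcases o with _ | ⟨s, rc⟩
  · simp at h
  · refine ⟨rc, ?_⟩
    simp only [Option.map_some, Option.some_inj] at h
    rw [h]

lemma act_last {E : List Bool → Bool → Prop} {p : List Bool} (hp : actOf E p) (hne : p ≠ []) :
    ∃ q i, p = q ++ [i] ∧ E q i := by
  rcases List.eq_nil_or_concat p with rfl | ⟨q, i, rfl⟩
  · exact absurd rfl hne
  · rw [List.concat_eq_append] at hp ⊢
    exact ⟨q, i, rfl, ((actOf_concat q i).mp hp).2⟩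

lemma inv1 (X Y : Fml) (Γ Δ : Multiset Fml)
    (h : ProvableInf false (Fml.imp X Y ::ₘ Γ, Δ)) :
    ProvableInf false (Y ::ₘ Γ, Δ) := by
  classical
  obtain ⟨π, hroot⟩ := h
  set t : Fml := Fml.imp X Y with htdef
  set T : Sequent → Sequent := fun s => (Y ::ₘ s.1.erase t, s.2) with hT
  set D : List Bool → Prop := fun c => ∃ s_c : Sequent,
      π.node c = some (s_c, RuleTag.impL) ∧
      (π.node (c ++ [false])).map Prod.fst = some (T s_c) with hD
  have hTroot : T (rootSeq π) = (Y ::ₘ Γ, Δ) := by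
    rw [hroot, hT]
    simp only []
    rw [Multiset.erase_cons_head]
  by_cases hD0 : D []
  · obtain ⟨s₀, h₀, h₁⟩ := hD0
    obtain ⟨rc, hn1⟩ := map_fst_some h₁
    have hrs : rootSeq π = s₀ := rootSeq_eq π h₀
    have hprov := provable_sub π [false] hn1
    rw [← hTroot, hrs]
    exact hprov
  · set E : List Bool → Bool → Prop := fun q i => ∃ s_c r_c,
        π.node (q ++ [i]) = some (s_c, r_c) ∧ t ∈ s_c.1 ∧ ¬ D (q ++ [i]) with hE
    set spec : List Bool → Bool → Option Sequent := fun q i =>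
      (π.node (q ++ [i])).map (fun x => if t ∈ x.1.1 then T x.1 else x.1) with hspec
    -- invariant at active nodes
    have hinv : ∀ p s r, actOf E p → π.node p = some (s, r) → t ∈ s.1 ∧ ¬ D p := by
      intro p s r hp hn
      rcases List.eq_nil_or_concat p with rfl | ⟨q, i, rfl⟩
      · have hs : s = (t ::ₘ Γ, Δ) := by
          rw [← hroot]; exact (rootSeq_eq π hn).symm
        rw [hs]
        exact ⟨Multiset.mem_cons_self _ _, hD0⟩
      · rw [List.concat_eq_append] at hp hn
        obtain ⟨s_c, r_c, hnode, hmem, hnD⟩ := ((actOf_concat q i).mp hp).2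
        rw [hn] at hnode
        obtain ⟨hs, -⟩ := Prod.mk.inj (Option.some_inj.mp hnode)
        rw [List.concat_eq_append]
        exact ⟨hs ▸ hmem, hnD⟩
    have hbuild := build π T E spec ?_ ?_ ?_ ?_ ?_
    · rwa [hTroot] at hbuild
    · -- hE
      rintro p i ⟨s_c, r_c, hn, -, -⟩
      rw [hn]; rfl
    · -- hiso
      intro p i _ _
      rw [hspec]
      simp only [Option.isSome_map]
    · -- hact
      rintro p i s_c r_c hp ⟨s_c', r_c', hn', hmem', -⟩ hn
      rw [hn] at hn'
      obtain ⟨hs, -⟩ := Prod.mk.inj (Option.some_inj.mp hn')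
      subst hs
      rw [hspec]
      simp only [hn, Option.map_some]
      rw [if_pos hmem']
    · -- horc
      intro p i s' hp hnE hsome hs'
      obtain ⟨⟨s_c, r_c⟩, hn⟩ := Option.isSome_iff_exists.mp hsome
      rw [hspec] at hs'
      simp only [hn, Option.map_some] at hs'
      by_cases hmem : t ∈ s_c.1
      · have hDc : D (p ++ [i]) := by
          by_contra hDc
          exact hnE ⟨s_c, r_c, hn, hmem, hDc⟩
        obtain ⟨s_c', hc', hfst⟩ := hDc
        rw [hn] at hc'
        obtain ⟨hs, -⟩ := Prod.mk.inj (Option.some_inj.mp hc')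
        subst hs
        obtain ⟨rc', hn''⟩ := map_fst_some hfst
        have hprov := provable_sub π ((p ++ [i]) ++ [false]) hn''
        rw [if_pos hmem] at hs'
        rw [← Option.some_inj.mp hs']
        exact hprov
      · rw [if_neg hmem] at hs'
        rw [← Option.some_inj.mp hs']
        exact provable_sub π (p ++ [i]) hn
    · -- hrules
      intro p s r hp hn
      obtain ⟨hmem, hDp⟩ := hinv p s r hp hn
      have hcor := π.correct p s r hn
      have hsp : ∀ i v rc, π.node (p ++ [i]) = some (v, rc) →
          spec p i = some (if t ∈ v.1 then T v else v) := by
        intro i v rc hni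
        rw [hspec]; simp only [hni, Option.map_some]
      have hspn : ∀ i, π.node (p ++ [i]) = none → spec p i = none := by
        intro i hni
        rw [hspec]; simp only [hni, Option.map_none]
      generalize hc1 : (π.node (p ++ [false])).map Prod.fst = o1 at hcor
      generalize hc2 : (π.node (p ++ [true])).map Prod.fst = o2 at hcor
      cases hcor with
      | ax c Γ' Δ' v =>
        have hn1 : π.node (p ++ [false]) = none := by
          rcases h' : π.node (p ++ [false]) with _ | w
          · rfl
          · rw [h'] at hc1; exact absurd hc1 (by simp)
        have hn2 : π.node (p ++ [true]) = none := by
          rcases h' : π.node (p ++ [true]) with _ | w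
          · rfl
          · rw [h'] at hc2; exact absurd hc2 (by simp)
        rw [hspn false hn1, hspn true hn2]
        have hmem' : t ∈ Γ' := by
          rcases Multiset.mem_cons.mp hmem with h' | h'
          · exact absurd h' (by rw [htdef]; simp)
          · exact h'
        have e1 : T (Fml.var v ::ₘ Γ', Fml.var v ::ₘ Δ')
            = (Fml.var v ::ₘ Y ::ₘ Γ'.erase t, Fml.var v ::ₘ Δ') := by
          rw [hT]; simp only []
          rw [erase_cons_of_mem hmem', Multiset.cons_swap]
        rw [e1]
        exact Rules.ax false _ _ v
      | axBot c Γ' Δ' =>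
        have hn1 : π.node (p ++ [false]) = none := by
          rcases h' : π.node (p ++ [false]) with _ | w
          · rfl
          · rw [h'] at hc1; exact absurd hc1 (by simp)
        have hn2 : π.node (p ++ [true]) = none := by
          rcases h' : π.node (p ++ [true]) with _ | w
          · rfl
          · rw [h'] at hc2; exact absurd hc2 (by simp)
        rw [hspn false hn1, hspn true hn2]
        have hmem' : t ∈ Γ' := by
          rcases Multiset.mem_cons.mp hmem with h' | h'
          · exact absurd h' (by rw [htdef]; simp)
          · exact h'
        have e1 : T (Fml.bot ::ₘ Γ', Δ') = (Fml.bot ::ₘ Y ::ₘ Γ'.erase t, Δ') := by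
          rw [hT]; simp only []
          rw [erase_cons_of_mem hmem', Multiset.cons_swap]
        rw [e1]
        exact Rules.axBot false _ _
      | impL c Γ' Δ' a b =>
        obtain ⟨rc1, hn1⟩ := map_fst_some hc1
        obtain ⟨rc2, hn2⟩ := map_fst_some hc2
        rcases eq_or_ne (Fml.imp a b) t with heq | hne
        · exfalso
          apply hDp
          refine ⟨(Fml.imp a b ::ₘ Γ', Δ'), hn, ?_⟩
          rw [hc1]
          congr 1
          rw [hT]; simp only []
          rw [heq, Multiset.erase_cons_head]
          have hb : b = Y := by
            rw [htdef] at heq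
            exact (Fml.imp.inj heq).2
          rw [hb]
        · have htg : t ∈ Γ' := by
            rcases Multiset.mem_cons.mp hmem with h' | h'
            · exact absurd h'.symm hne
            · exact h'
          rw [hsp false _ _ hn1, hsp true _ _ hn2]
          have m1 : t ∈ (b ::ₘ Γ' : Multiset Fml) := Multiset.mem_cons_of_mem htg
          rw [if_pos m1, if_pos htg]
          have e1 : T (Fml.imp a b ::ₘ Γ', Δ') = (Fml.imp a b ::ₘ Y ::ₘ Γ'.erase t, Δ') := by
            rw [hT]; simp only []
            rw [erase_cons_of_mem htg, Multiset.cons_swap]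
          have e2 : T (b ::ₘ Γ', Δ') = (b ::ₘ Y ::ₘ Γ'.erase t, Δ') := by
            rw [hT]; simp only []
            rw [erase_cons_of_mem htg, Multiset.cons_swap]
          rw [e1, e2]
          exact Rules.impL false _ _ a b
      | impR c Γ' Δ' a b =>
        obtain ⟨rc1, hn1⟩ := map_fst_some hc1
        have hn2 : π.node (p ++ [true]) = none := by
          rcases h' : π.node (p ++ [true]) with _ | w
          · rfl
          · rw [h'] at hc2; exact absurd hc2 (by simp)
        rw [hsp false _ _ hn1, hspn true hn2]
        have m1 : t ∈ (a ::ₘ Γ' : Multiset Fml) := Multiset.mem_cons_of_mem hmem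
        rw [if_pos m1]
        have e1 : T (Γ', Fml.imp a b ::ₘ Δ') = (Y ::ₘ Γ'.erase t, Fml.imp a b ::ₘ Δ') := by
          rw [hT]
        have e2 : T (a ::ₘ Γ', b ::ₘ Δ') = (a ::ₘ Y ::ₘ Γ'.erase t, b ::ₘ Δ') := by
          rw [hT]; simp only []
          rw [erase_cons_of_mem hmem, Multiset.cons_swap]
        rw [e1, e2]
        exact Rules.impR false _ _ a b
      | refl c Γ' Δ' b =>
        obtain ⟨rc1, hn1⟩ := map_fst_some hc1
        have hn2 : π.node (p ++ [true]) = none := by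
          rcases h' : π.node (p ++ [true]) with _ | w
          · rfl
          · rw [h'] at hc2; exact absurd hc2 (by simp)
        rw [hsp false _ _ hn1, hspn true hn2]
        have htg : t ∈ Γ' := by
          rcases Multiset.mem_cons.mp hmem with h' | h'
          · exact absurd h' (by rw [htdef]; simp)
          · exact h'
        have m1 : t ∈ (b ::ₘ Fml.box b ::ₘ Γ' : Multiset Fml) :=
          Multiset.mem_cons_of_mem (Multiset.mem_cons_of_mem htg)
        rw [if_pos m1]
        have e1 : T (Fml.box b ::ₘ Γ', Δ') = (Fml.box b ::ₘ Y ::ₘ Γ'.erase t, Δ') := by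
          rw [hT]; simp only []
          rw [erase_cons_of_mem htg, Multiset.cons_swap]
        have e2 : T (b ::ₘ Fml.box b ::ₘ Γ', Δ')
            = (b ::ₘ Fml.box b ::ₘ Y ::ₘ Γ'.erase t, Δ') := by
          rw [hT]; simp only []
          rw [erase_cons_of_mem (Multiset.mem_cons_of_mem htg), erase_cons_of_mem htg,
            Multiset.cons_swap Y b]
          congr 1
          rw [Multiset.cons_swap Y (Fml.box b)]
        rw [e1, e2]
        exact Rules.refl false _ _ b
      | box c Γ₀ Φ Δ' a =>
        obtain ⟨rc1, hn1⟩ := map_fst_some hc1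
        obtain ⟨rc2, hn2⟩ := map_fst_some hc2
        have htg : t ∈ Γ₀ := by
          have hnotbox : t ∉ Φ.map Fml.box := by
            intro hmem'
            obtain ⟨w, -, hw⟩ := Multiset.mem_map.mp hmem'
            rw [htdef] at hw; exact Fml.noConfusion hw
          rcases Multiset.mem_add.mp hmem with h' | h'
          · exact h'
          · exact absurd h' hnotbox
        have hnotbox : t ∉ Φ.map Fml.box := by
          intro hmem'
          obtain ⟨w, -, hw⟩ := Multiset.mem_map.mp hmem'
          rw [htdef] at hw; exact Fml.noConfusion hw
        rw [hsp false _ _ hn1, hsp true _ _ hn2]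
        have m1 : t ∈ (Γ₀ + Φ.map Fml.box : Multiset Fml) := Multiset.mem_add.mpr (Or.inl htg)
        rw [if_pos m1, if_neg hnotbox]
        have hsum : (Γ₀ + Φ.map Fml.box).erase t = Γ₀.erase t + Φ.map Fml.box :=
          Multiset.erase_add_left_pos _ htg
        have e1 : T (Γ₀ + Φ.map Fml.box, Fml.box a ::ₘ Δ')
            = ((Y ::ₘ Γ₀.erase t) + Φ.map Fml.box, Fml.box a ::ₘ Δ') := by
          rw [hT]; simp only []
          rw [hsum, Multiset.cons_add]
        have e2 : T (Γ₀ + Φ.map Fml.box, a ::ₘ Δ')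
            = ((Y ::ₘ Γ₀.erase t) + Φ.map Fml.box, a ::ₘ Δ') := by
          rw [hT]; simp only []
          rw [hsum, Multiset.cons_add]
        rw [e1, e2]
        exact Rules.box false _ _ _ a

end GrzAux
namespace GrzAux

open Multiset

lemma inv2 (X Y : Fml) (Γ Δ : Multiset Fml)
    (h : ProvableInf false (Fml.imp X Y ::ₘ Γ, Δ)) :
    ProvableInf false (Γ, X ::ₘ Δ) := by
  classical
  obtain ⟨π, hroot⟩ := h
  set t : Fml := Fml.imp X Y with htdef
  set T : Sequent → Sequent := fun s => (s.1.erase t, X ::ₘ s.2) with hT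
  set D : List Bool → Prop := fun c => ∃ s_c : Sequent,
      π.node c = some (s_c, RuleTag.impL) ∧
      (π.node (c ++ [true])).map Prod.fst = some (T s_c) with hD
  have hTroot : T (rootSeq π) = (Γ, X ::ₘ Δ) := by
    rw [hroot, hT]
    simp only []
    rw [Multiset.erase_cons_head]
  by_cases hD0 : D []
  · obtain ⟨s₀, h₀, h₁⟩ := hD0
    obtain ⟨rc, hn1⟩ := map_fst_some h₁
    have hrs : rootSeq π = s₀ := rootSeq_eq π h₀
    have hprov := provable_sub π [true] hn1
    rw [← hTroot, hrs]
    exact hprov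
  · set E : List Bool → Bool → Prop := fun q i => ∃ s_c r_c,
        π.node (q ++ [i]) = some (s_c, r_c) ∧ t ∈ s_c.1 ∧ ¬ D (q ++ [i]) with hE
    set spec : List Bool → Bool → Option Sequent := fun q i =>
      (π.node (q ++ [i])).map (fun x => if t ∈ x.1.1 then T x.1 else x.1) with hspec
    have hinv : ∀ p s r, actOf E p → π.node p = some (s, r) → t ∈ s.1 ∧ ¬ D p := by
      intro p s r hp hn
      rcases List.eq_nil_or_concat p with rfl | ⟨q, i, rfl⟩
      · have hs : s = (t ::ₘ Γ, Δ) := by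
          rw [← hroot]; exact (rootSeq_eq π hn).symm
        rw [hs]
        exact ⟨Multiset.mem_cons_self _ _, hD0⟩
      · rw [List.concat_eq_append] at hp hn
        obtain ⟨s_c, r_c, hnode, hmem, hnD⟩ := ((actOf_concat q i).mp hp).2
        rw [hn] at hnode
        obtain ⟨hs, -⟩ := Prod.mk.inj (Option.some_inj.mp hnode)
        rw [List.concat_eq_append]
        exact ⟨hs ▸ hmem, hnD⟩
    have hbuild := build π T E spec ?_ ?_ ?_ ?_ ?_
    · rwa [hTroot] at hbuild
    · rintro p i ⟨s_c, r_c, hn, -, -⟩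
      rw [hn]; rfl
    · intro p i _ _
      rw [hspec]
      simp only [Option.isSome_map]
    · rintro p i s_c r_c hp ⟨s_c', r_c', hn', hmem', -⟩ hn
      rw [hn] at hn'
      obtain ⟨hs, -⟩ := Prod.mk.inj (Option.some_inj.mp hn')
      subst hs
      rw [hspec]
      simp only [hn, Option.map_some]
      rw [if_pos hmem']
    · intro p i s' hp hnE hsome hs'
      obtain ⟨⟨s_c, r_c⟩, hn⟩ := Option.isSome_iff_exists.mp hsome
      rw [hspec] at hs'
      simp only [hn, Option.map_some] at hs'
      by_cases hmem : t ∈ s_c.1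
      · have hDc : D (p ++ [i]) := by
          by_contra hDc
          exact hnE ⟨s_c, r_c, hn, hmem, hDc⟩
        obtain ⟨s_c', hc', hfst⟩ := hDc
        rw [hn] at hc'
        obtain ⟨hs, -⟩ := Prod.mk.inj (Option.some_inj.mp hc')
        subst hs
        obtain ⟨rc', hn''⟩ := map_fst_some hfst
        have hprov := provable_sub π ((p ++ [i]) ++ [true]) hn''
        rw [if_pos hmem] at hs'
        rw [← Option.some_inj.mp hs']
        exact hprov
      · rw [if_neg hmem] at hs'
        rw [← Option.some_inj.mp hs']
        exact provable_sub π (p ++ [i]) hn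
    · intro p s r hp hn
      obtain ⟨hmem, hDp⟩ := hinv p s r hp hn
      have hcor := π.correct p s r hn
      have hsp : ∀ i v rc, π.node (p ++ [i]) = some (v, rc) →
          spec p i = some (if t ∈ v.1 then T v else v) := by
        intro i v rc hni
        rw [hspec]; simp only [hni, Option.map_some]
      have hspn : ∀ i, π.node (p ++ [i]) = none → spec p i = none := by
        intro i hni
        rw [hspec]; simp only [hni, Option.map_none]
      generalize hc1 : (π.node (p ++ [false])).map Prod.fst = o1 at hcor
      generalize hc2 : (π.node (p ++ [true])).map Prod.fst = o2 at hcor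
      cases hcor with
      | ax c Γ' Δ' v =>
        have hn1 : π.node (p ++ [false]) = none := by
          rcases h' : π.node (p ++ [false]) with _ | w
          · rfl
          · rw [h'] at hc1; exact absurd hc1 (by simp)
        have hn2 : π.node (p ++ [true]) = none := by
          rcases h' : π.node (p ++ [true]) with _ | w
          · rfl
          · rw [h'] at hc2; exact absurd hc2 (by simp)
        rw [hspn false hn1, hspn true hn2]
        have hmem' : t ∈ Γ' := by
          rcases Multiset.mem_cons.mp hmem with h' | h'
          · exact absurd h' (by rw [htdef]; simp)
          · exact h'
        have e1 : T (Fml.var v ::ₘ Γ', Fml.var v ::ₘ Δ')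
            = (Fml.var v ::ₘ Γ'.erase t, Fml.var v ::ₘ X ::ₘ Δ') := by
          rw [hT]; simp only []
          rw [erase_cons_of_mem hmem', Multiset.cons_swap X (Fml.var v)]
        rw [e1]
        exact Rules.ax false _ _ v
      | axBot c Γ' Δ' =>
        have hn1 : π.node (p ++ [false]) = none := by
          rcases h' : π.node (p ++ [false]) with _ | w
          · rfl
          · rw [h'] at hc1; exact absurd hc1 (by simp)
        have hn2 : π.node (p ++ [true]) = none := by
          rcases h' : π.node (p ++ [true]) with _ | w
          · rfl
          · rw [h'] at hc2; exact absurd hc2 (by simp)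
        rw [hspn false hn1, hspn true hn2]
        have hmem' : t ∈ Γ' := by
          rcases Multiset.mem_cons.mp hmem with h' | h'
          · exact absurd h' (by rw [htdef]; simp)
          · exact h'
        have e1 : T (Fml.bot ::ₘ Γ', Δ') = (Fml.bot ::ₘ Γ'.erase t, X ::ₘ Δ') := by
          rw [hT]; simp only []
          rw [erase_cons_of_mem hmem']
        rw [e1]
        exact Rules.axBot false _ _
      | impL c Γ' Δ' a b =>
        obtain ⟨rc1, hn1⟩ := map_fst_some hc1
        obtain ⟨rc2, hn2⟩ := map_fst_some hc2
        rcases eq_or_ne (Fml.imp a b) t with heq | hne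
        · exfalso
          apply hDp
          refine ⟨(Fml.imp a b ::ₘ Γ', Δ'), hn, ?_⟩
          rw [hc2]
          congr 1
          rw [hT]; simp only []
          rw [heq, Multiset.erase_cons_head]
          have ha : a = X := by
            rw [htdef] at heq
            exact (Fml.imp.inj heq).1
          rw [ha]
        · have htg : t ∈ Γ' := by
            rcases Multiset.mem_cons.mp hmem with h' | h'
            · exact absurd h'.symm hne
            · exact h'
          rw [hsp false _ _ hn1, hsp true _ _ hn2]
          have m1 : t ∈ (b ::ₘ Γ' : Multiset Fml) := Multiset.mem_cons_of_mem htg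
          rw [if_pos m1, if_pos htg]
          have e1 : T (Fml.imp a b ::ₘ Γ', Δ') = (Fml.imp a b ::ₘ Γ'.erase t, X ::ₘ Δ') := by
            rw [hT]; simp only []
            rw [erase_cons_of_mem htg]
          have e2 : T (b ::ₘ Γ', Δ') = (b ::ₘ Γ'.erase t, X ::ₘ Δ') := by
            rw [hT]; simp only []
            rw [erase_cons_of_mem htg]
          have e3 : T (Γ', a ::ₘ Δ') = (Γ'.erase t, a ::ₘ X ::ₘ Δ') := by
            rw [hT]; simp only []
            rw [Multiset.cons_swap X a]
          rw [e1, e2, e3]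
          exact Rules.impL false _ _ a b
      | impR c Γ' Δ' a b =>
        obtain ⟨rc1, hn1⟩ := map_fst_some hc1
        have hn2 : π.node (p ++ [true]) = none := by
          rcases h' : π.node (p ++ [true]) with _ | w
          · rfl
          · rw [h'] at hc2; exact absurd hc2 (by simp)
        rw [hsp false _ _ hn1, hspn true hn2]
        have m1 : t ∈ (a ::ₘ Γ' : Multiset Fml) := Multiset.mem_cons_of_mem hmem
        rw [if_pos m1]
        have e1 : T (Γ', Fml.imp a b ::ₘ Δ') = (Γ'.erase t, Fml.imp a b ::ₘ X ::ₘ Δ') := by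
          rw [hT]; simp only []
          rw [Multiset.cons_swap X (Fml.imp a b)]
        have e2 : T (a ::ₘ Γ', b ::ₘ Δ') = (a ::ₘ Γ'.erase t, b ::ₘ X ::ₘ Δ') := by
          rw [hT]; simp only []
          rw [erase_cons_of_mem hmem, Multiset.cons_swap X b]
        rw [e1, e2]
        exact Rules.impR false _ _ a b
      | refl c Γ' Δ' b =>
        obtain ⟨rc1, hn1⟩ := map_fst_some hc1
        have hn2 : π.node (p ++ [true]) = none := by
          rcases h' : π.node (p ++ [true]) with _ | w
          · rfl
          · rw [h'] at hc2; exact absurd hc2 (by simp)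
        rw [hsp false _ _ hn1, hspn true hn2]
        have htg : t ∈ Γ' := by
          rcases Multiset.mem_cons.mp hmem with h' | h'
          · exact absurd h' (by rw [htdef]; simp)
          · exact h'
        have m1 : t ∈ (b ::ₘ Fml.box b ::ₘ Γ' : Multiset Fml) :=
          Multiset.mem_cons_of_mem (Multiset.mem_cons_of_mem htg)
        rw [if_pos m1]
        have e1 : T (Fml.box b ::ₘ Γ', Δ') = (Fml.box b ::ₘ Γ'.erase t, X ::ₘ Δ') := by
          rw [hT]; simp only []
          rw [erase_cons_of_mem htg]
        have e2 : T (b ::ₘ Fml.box b ::ₘ Γ', Δ')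
            = (b ::ₘ Fml.box b ::ₘ Γ'.erase t, X ::ₘ Δ') := by
          rw [hT]; simp only []
          rw [erase_cons_of_mem (Multiset.mem_cons_of_mem htg), erase_cons_of_mem htg]
        rw [e1, e2]
        exact Rules.refl false _ _ b
      | box c Γ₀ Φ Δ' a =>
        obtain ⟨rc1, hn1⟩ := map_fst_some hc1
        obtain ⟨rc2, hn2⟩ := map_fst_some hc2
        have hnotbox : t ∉ Φ.map Fml.box := by
          intro hmem'
          obtain ⟨w, -, hw⟩ := Multiset.mem_map.mp hmem'
          rw [htdef] at hw; exact Fml.noConfusion hw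
        have htg : t ∈ Γ₀ := by
          rcases Multiset.mem_add.mp hmem with h' | h'
          · exact h'
          · exact absurd h' hnotbox
        rw [hsp false _ _ hn1, hsp true _ _ hn2]
        have m1 : t ∈ (Γ₀ + Φ.map Fml.box : Multiset Fml) := Multiset.mem_add.mpr (Or.inl htg)
        rw [if_pos m1, if_neg hnotbox]
        have hsum : (Γ₀ + Φ.map Fml.box).erase t = Γ₀.erase t + Φ.map Fml.box :=
          Multiset.erase_add_left_pos _ htg
        have e1 : T (Γ₀ + Φ.map Fml.box, Fml.box a ::ₘ Δ')
            = (Γ₀.erase t + Φ.map Fml.box, Fml.box a ::ₘ X ::ₘ Δ') := by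
          rw [hT]; simp only []
          rw [hsum, Multiset.cons_swap X (Fml.box a)]
        have e2 : T (Γ₀ + Φ.map Fml.box, a ::ₘ Δ')
            = (Γ₀.erase t + Φ.map Fml.box, a ::ₘ X ::ₘ Δ') := by
          rw [hT]; simp only []
          rw [hsum, Multiset.cons_swap X a]
        rw [e1, e2]
        exact Rules.box false _ _ _ a

end GrzAux
namespace GrzAux

open Multiset

lemma inv3 (X Y : Fml) (Γ Δ : Multiset Fml)
    (h : ProvableInf false (Γ, Fml.imp X Y ::ₘ Δ)) :
    ProvableInf false (X ::ₘ Γ, Y ::ₘ Δ) := by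
  classical
  obtain ⟨π, hroot⟩ := h
  set t : Fml := Fml.imp X Y with htdef
  set T : Sequent → Sequent := fun s => (X ::ₘ s.1, Y ::ₘ s.2.erase t) with hT
  set isBox : List Bool → Prop := fun q => ∃ sq, π.node q = some (sq, RuleTag.box) with hisBox
  set D : List Bool → Prop := fun c => ∃ s_c : Sequent,
      π.node c = some (s_c, RuleTag.impR) ∧
      (π.node (c ++ [false])).map Prod.fst = some (T s_c) with hD
  have hTroot : T (rootSeq π) = (X ::ₘ Γ, Y ::ₘ Δ) := by
    rw [hroot, hT]
    simp only []
    rw [Multiset.erase_cons_head]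
  by_cases hD0 : D []
  · obtain ⟨s₀, h₀, h₁⟩ := hD0
    obtain ⟨rc, hn1⟩ := map_fst_some h₁
    have hrs : rootSeq π = s₀ := rootSeq_eq π h₀
    have hprov := provable_sub π [false] hn1
    rw [← hTroot, hrs]
    exact hprov
  · set E : List Bool → Bool → Prop := fun q i => (∃ s_c r_c,
        π.node (q ++ [i]) = some (s_c, r_c) ∧ t ∈ s_c.2 ∧ ¬ D (q ++ [i]))
        ∧ ¬ (i = true ∧ isBox q) with hE
    set spec : List Bool → Bool → Option Sequent := fun q i =>
      (π.node (q ++ [i])).map (fun x => if i = true ∧ isBox q then x.1 else T x.1) with hspec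
    have hinv : ∀ p s r, actOf E p → π.node p = some (s, r) → t ∈ s.2 ∧ ¬ D p := by
      intro p s r hp hn
      rcases List.eq_nil_or_concat p with rfl | ⟨q, i, rfl⟩
      · have hs : s = (Γ, t ::ₘ Δ) := by
          rw [← hroot]; exact (rootSeq_eq π hn).symm
        rw [hs]
        exact ⟨Multiset.mem_cons_self _ _, hD0⟩
      · rw [List.concat_eq_append] at hp hn
        obtain ⟨⟨s_c, r_c, hnode, hmem, hnD⟩, -⟩ := ((actOf_concat q i).mp hp).2
        rw [hn] at hnode
        obtain ⟨hs, -⟩ := Prod.mk.inj (Option.some_inj.mp hnode)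
        rw [List.concat_eq_append]
        exact ⟨hs ▸ hmem, hnD⟩
    have hbuild := build π T E spec ?_ ?_ ?_ ?_ ?_
    · rwa [hTroot] at hbuild
    · rintro p i ⟨⟨s_c, r_c, hn, -, -⟩, -⟩
      rw [hn]; rfl
    · intro p i _ _
      rw [hspec]
      simp only [Option.isSome_map]
    · rintro p i s_c r_c hp ⟨⟨s_c', r_c', hn', hmem', -⟩, hnbr⟩ hn
      rw [hn] at hn'
      obtain ⟨hs, -⟩ := Prod.mk.inj (Option.some_inj.mp hn')
      subst hs
      rw [hspec]
      simp only [hn, Option.map_some]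
      rw [if_neg hnbr]
    · intro p i s' hp hnE hsome hs'
      obtain ⟨⟨s_c, r_c⟩, hn⟩ := Option.isSome_iff_exists.mp hsome
      rw [hspec] at hs'
      simp only [hn, Option.map_some] at hs'
      by_cases hbr : i = true ∧ isBox p
      · rw [if_pos hbr] at hs'
        rw [← Option.some_inj.mp hs']
        exact provable_sub π (p ++ [i]) hn
      · rw [if_neg hbr] at hs'
        rw [← Option.some_inj.mp hs']
        by_cases hDc : D (p ++ [i])
        · obtain ⟨s_c', hc', hfst⟩ := hDc
          rw [hn] at hc'
          obtain ⟨hs, -⟩ := Prod.mk.inj (Option.some_inj.mp hc')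
          subst hs
          obtain ⟨rc', hn''⟩ := map_fst_some hfst
          exact provable_sub π ((p ++ [i]) ++ [false]) hn''
        · -- derive a contradiction: t must occur in the child's succedent
          exfalso
          have hmemc : t ∉ s_c.2 := by
            intro hmemc
            exact hnE ⟨⟨s_c, r_c, hn, hmemc, hDc⟩, hbr⟩
          have hpsome : (π.node p).isSome := node_isSome_of_append π p [i] (by rw [hn]; rfl)
          obtain ⟨⟨s, r⟩, hnp⟩ := Option.isSome_iff_exists.mp hpsome
          obtain ⟨hmem, hDp⟩ := hinv p s r hp hnp
          have hcor := π.correct p s r hnp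
          generalize hc1 : (π.node (p ++ [false])).map Prod.fst = o1 at hcor
          generalize hc2 : (π.node (p ++ [true])).map Prod.fst = o2 at hcor
          cases hcor with
          | ax c Γ' Δ' v =>
            cases i
            · rcases h' : π.node (p ++ [false]) with _ | w
              · rw [h'] at hn; exact absurd hn (by simp)
              · rw [h'] at hc1; exact absurd hc1 (by simp)
            · rcases h' : π.node (p ++ [true]) with _ | w
              · rw [h'] at hn; exact absurd hn (by simp)
              · rw [h'] at hc2; exact absurd hc2 (by simp)
          | axBot c Γ' Δ' =>
            cases i
            · rcases h' : π.node (p ++ [false]) with _ | w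
              · rw [h'] at hn; exact absurd hn (by simp)
              · rw [h'] at hc1; exact absurd hc1 (by simp)
            · rcases h' : π.node (p ++ [true]) with _ | w
              · rw [h'] at hn; exact absurd hn (by simp)
              · rw [h'] at hc2; exact absurd hc2 (by simp)
          | impL c Γ' Δ' a b =>
            cases i
            · obtain ⟨rc1, hn1⟩ := map_fst_some hc1
              rw [hn] at hn1
              obtain ⟨hs, -⟩ := Prod.mk.inj (Option.some_inj.mp hn1)
              rw [hs] at hmemc
              exact hmemc hmem
            · obtain ⟨rc2, hn2⟩ := map_fst_some hc2
              rw [hn] at hn2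
              obtain ⟨hs, -⟩ := Prod.mk.inj (Option.some_inj.mp hn2)
              rw [hs] at hmemc
              exact hmemc (Multiset.mem_cons_of_mem hmem)
          | impR c Γ' Δ' a b =>
            rcases eq_or_ne (Fml.imp a b) t with heq | hne
            · apply hDp
              refine ⟨(Γ', Fml.imp a b ::ₘ Δ'), hnp, ?_⟩
              rw [hc1]
              congr 1
              rw [hT]; simp only []
              rw [heq, Multiset.erase_cons_head]
              obtain ⟨ha, hb⟩ := Fml.imp.inj (htdef ▸ heq)
              rw [ha, hb]
            · have htg : t ∈ Δ' := by
                rcases Multiset.mem_cons.mp hmem with h' | h'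
                · exact absurd h'.symm hne
                · exact h'
              cases i
              · obtain ⟨rc1, hn1⟩ := map_fst_some hc1
                rw [hn] at hn1
                obtain ⟨hs, -⟩ := Prod.mk.inj (Option.some_inj.mp hn1)
                rw [hs] at hmemc
                exact hmemc (Multiset.mem_cons_of_mem htg)
              · rcases h' : π.node (p ++ [true]) with _ | w
                · rw [h'] at hn; exact absurd hn (by simp)
                · rw [h'] at hc2; exact absurd hc2 (by simp)
          | refl c Γ' Δ' b =>
            cases i
            · obtain ⟨rc1, hn1⟩ := map_fst_some hc1
              rw [hn] at hn1
              obtain ⟨hs, -⟩ := Prod.mk.inj (Option.some_inj.mp hn1)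
              rw [hs] at hmemc
              exact hmemc hmem
            · rcases h' : π.node (p ++ [true]) with _ | w
              · rw [h'] at hn; exact absurd hn (by simp)
              · rw [h'] at hc2; exact absurd hc2 (by simp)
          | box c Γ₀ Φ Δ' a =>
            cases i
            · obtain ⟨rc1, hn1⟩ := map_fst_some hc1
              rw [hn] at hn1
              obtain ⟨hs, -⟩ := Prod.mk.inj (Option.some_inj.mp hn1)
              have htg : t ∈ Δ' := by
                rcases Multiset.mem_cons.mp hmem with h' | h'
                · exact absurd h' (by rw [htdef]; simp)
                · exact h'
              rw [hs] at hmemc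
              exact hmemc (Multiset.mem_cons_of_mem htg)
            · exact hbr ⟨rfl, ⟨(Γ₀ + Φ.map Fml.box, Fml.box a ::ₘ Δ'), hnp⟩⟩
    · intro p s r hp hn
      obtain ⟨hmem, hDp⟩ := hinv p s r hp hn
      have hcor := π.correct p s r hn
      have hsp : ∀ i v rc, π.node (p ++ [i]) = some (v, rc) →
          spec p i = some (if i = true ∧ isBox p then v else T v) := by
        intro i v rc hni
        rw [hspec]; simp only [hni, Option.map_some]
      have hspn : ∀ i, π.node (p ++ [i]) = none → spec p i = none := by
        intro i hni
        rw [hspec]; simp only [hni, Option.map_none]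
      generalize hc1 : (π.node (p ++ [false])).map Prod.fst = o1 at hcor
      generalize hc2 : (π.node (p ++ [true])).map Prod.fst = o2 at hcor
      cases hcor with
      | ax c Γ' Δ' v =>
        have hn1 : π.node (p ++ [false]) = none := by
          rcases h' : π.node (p ++ [false]) with _ | w
          · rfl
          · rw [h'] at hc1; exact absurd hc1 (by simp)
        have hn2 : π.node (p ++ [true]) = none := by
          rcases h' : π.node (p ++ [true]) with _ | w
          · rfl
          · rw [h'] at hc2; exact absurd hc2 (by simp)
        rw [hspn false hn1, hspn true hn2]
        have hmem' : t ∈ Δ' := by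
          rcases Multiset.mem_cons.mp hmem with h' | h'
          · exact absurd h' (by rw [htdef]; simp)
          · exact h'
        have e1 : T (Fml.var v ::ₘ Γ', Fml.var v ::ₘ Δ')
            = (Fml.var v ::ₘ X ::ₘ Γ', Fml.var v ::ₘ Y ::ₘ Δ'.erase t) := by
          rw [hT]; simp only []
          rw [erase_cons_of_mem hmem', Multiset.cons_swap X (Fml.var v),
            Multiset.cons_swap Y (Fml.var v)]
        rw [e1]
        exact Rules.ax false _ _ v
      | axBot c Γ' Δ' =>
        have hn1 : π.node (p ++ [false]) = none := by
          rcases h' : π.node (p ++ [false]) with _ | w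
          · rfl
          · rw [h'] at hc1; exact absurd hc1 (by simp)
        have hn2 : π.node (p ++ [true]) = none := by
          rcases h' : π.node (p ++ [true]) with _ | w
          · rfl
          · rw [h'] at hc2; exact absurd hc2 (by simp)
        rw [hspn false hn1, hspn true hn2]
        have e1 : T (Fml.bot ::ₘ Γ', Δ') = (Fml.bot ::ₘ X ::ₘ Γ', Y ::ₘ Δ'.erase t) := by
          rw [hT]; simp only []
          rw [Multiset.cons_swap X Fml.bot]
        rw [e1]
        exact Rules.axBot false _ _
      | impL c Γ' Δ' a b =>
        obtain ⟨rc1, hn1⟩ := map_fst_some hc1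
        obtain ⟨rc2, hn2⟩ := map_fst_some hc2
        have hnb : ¬ isBox p := by
          rintro ⟨sq, hq⟩
          rw [hn] at hq
          obtain ⟨-, h2⟩ := Prod.mk.inj (Option.some_inj.mp hq)
          exact RuleTag.noConfusion h2
        rw [hsp false _ _ hn1, hsp true _ _ hn2]
        rw [if_neg (by rintro ⟨h', -⟩; exact Bool.noConfusion h'),
          if_neg (by rintro ⟨-, h'⟩; exact hnb h')]
        have e1 : T (Fml.imp a b ::ₘ Γ', Δ')
            = (Fml.imp a b ::ₘ X ::ₘ Γ', Y ::ₘ Δ'.erase t) := by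
          rw [hT]; simp only []
          rw [Multiset.cons_swap X (Fml.imp a b)]
        have e2 : T (b ::ₘ Γ', Δ') = (b ::ₘ X ::ₘ Γ', Y ::ₘ Δ'.erase t) := by
          rw [hT]; simp only []
          rw [Multiset.cons_swap X b]
        have e3 : T (Γ', a ::ₘ Δ') = (X ::ₘ Γ', a ::ₘ Y ::ₘ Δ'.erase t) := by
          rw [hT]; simp only []
          rw [erase_cons_of_mem hmem, Multiset.cons_swap Y a]
        rw [e1, e2, e3]
        exact Rules.impL false _ _ a b
      | impR c Γ' Δ' a b =>
        obtain ⟨rc1, hn1⟩ := map_fst_some hc1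
        have hn2 : π.node (p ++ [true]) = none := by
          rcases h' : π.node (p ++ [true]) with _ | w
          · rfl
          · rw [h'] at hc2; exact absurd hc2 (by simp)
        have hnb : ¬ isBox p := by
          rintro ⟨sq, hq⟩
          rw [hn] at hq
          obtain ⟨-, h2⟩ := Prod.mk.inj (Option.some_inj.mp hq)
          exact RuleTag.noConfusion h2
        rcases eq_or_ne (Fml.imp a b) t with heq | hne
        · exfalso
          apply hDp
          refine ⟨(Γ', Fml.imp a b ::ₘ Δ'), hn, ?_⟩
          rw [hc1]
          congr 1
          rw [hT]; simp only []
          rw [heq, Multiset.erase_cons_head]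
          obtain ⟨ha, hb⟩ := Fml.imp.inj (htdef ▸ heq)
          rw [ha, hb]
        · have htg : t ∈ Δ' := by
            rcases Multiset.mem_cons.mp hmem with h' | h'
            · exact absurd h'.symm hne
            · exact h'
          rw [hsp false _ _ hn1, hspn true hn2]
          rw [if_neg (by rintro ⟨h', -⟩; exact Bool.noConfusion h')]
          have e1 : T (Γ', Fml.imp a b ::ₘ Δ')
              = (X ::ₘ Γ', Fml.imp a b ::ₘ Y ::ₘ Δ'.erase t) := by
            rw [hT]; simp only []
            rw [erase_cons_of_mem htg, Multiset.cons_swap Y (Fml.imp a b)]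
          have e2 : T (a ::ₘ Γ', b ::ₘ Δ')
              = (a ::ₘ X ::ₘ Γ', b ::ₘ Y ::ₘ Δ'.erase t) := by
            rw [hT]; simp only []
            rw [erase_cons_of_mem htg, Multiset.cons_swap X a, Multiset.cons_swap Y b]
          rw [e1, e2]
          exact Rules.impR false _ _ a b
      | refl c Γ' Δ' b =>
        obtain ⟨rc1, hn1⟩ := map_fst_some hc1
        have hn2 : π.node (p ++ [true]) = none := by
          rcases h' : π.node (p ++ [true]) with _ | w
          · rfl
          · rw [h'] at hc2; exact absurd hc2 (by simp)
        have hnb : ¬ isBox p := by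
          rintro ⟨sq, hq⟩
          rw [hn] at hq
          obtain ⟨-, h2⟩ := Prod.mk.inj (Option.some_inj.mp hq)
          exact RuleTag.noConfusion h2
        rw [hsp false _ _ hn1, hspn true hn2]
        rw [if_neg (by rintro ⟨h', -⟩; exact Bool.noConfusion h')]
        have e1 : T (Fml.box b ::ₘ Γ', Δ')
            = (Fml.box b ::ₘ X ::ₘ Γ', Y ::ₘ Δ'.erase t) := by
          rw [hT]; simp only []
          rw [Multiset.cons_swap X (Fml.box b)]
        have e2 : T (b ::ₘ Fml.box b ::ₘ Γ', Δ')
            = (b ::ₘ Fml.box b ::ₘ X ::ₘ Γ', Y ::ₘ Δ'.erase t) := by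
          rw [hT]; simp only []
          rw [Multiset.cons_swap X b]
          congr 1
          rw [Multiset.cons_swap X (Fml.box b)]
        rw [e1, e2]
        exact Rules.refl false _ _ b
      | box c Γ₀ Φ Δ' a =>
        obtain ⟨rc1, hn1⟩ := map_fst_some hc1
        obtain ⟨rc2, hn2⟩ := map_fst_some hc2
        have hb : isBox p := ⟨(Γ₀ + Φ.map Fml.box, Fml.box a ::ₘ Δ'), hn⟩
        have htg : t ∈ Δ' := by
          rcases Multiset.mem_cons.mp hmem with h' | h'
          · exact absurd h' (by rw [htdef]; simp)
          · exact h'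
        rw [hsp false _ _ hn1, hsp true _ _ hn2]
        rw [if_neg (by rintro ⟨h', -⟩; exact Bool.noConfusion h'), if_pos ⟨rfl, hb⟩]
        have e1 : T (Γ₀ + Φ.map Fml.box, Fml.box a ::ₘ Δ')
            = ((X ::ₘ Γ₀) + Φ.map Fml.box, Fml.box a ::ₘ Y ::ₘ Δ'.erase t) := by
          rw [hT]; simp only []
          rw [erase_cons_of_mem htg, Multiset.cons_swap Y (Fml.box a), Multiset.cons_add]
        have e2 : T (Γ₀ + Φ.map Fml.box, a ::ₘ Δ')
            = ((X ::ₘ Γ₀) + Φ.map Fml.box, a ::ₘ Y ::ₘ Δ'.erase t) := by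
          rw [hT]; simp only []
          rw [erase_cons_of_mem htg, Multiset.cons_swap Y a, Multiset.cons_add]
        rw [e1, e2]
        exact Rules.box false _ _ _ a

end GrzAux
namespace GrzAux

open Multiset

lemma inv4 (B : Fml) (Γ Δ : Multiset Fml)
    (h : ProvableInf false (Γ, Fml.box B ::ₘ Δ)) :
    ProvableInf false (Γ, B ::ₘ Δ) := by
  classical
  obtain ⟨π, hroot⟩ := h
  set t : Fml := Fml.box B with htdef
  set T : Sequent → Sequent := fun s => (s.1, B ::ₘ s.2.erase t) with hT
  set isBox : List Bool → Prop := fun q => ∃ sq, π.node q = some (sq, RuleTag.box) with hisBox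
  set D : List Bool → Prop := fun c => ∃ s_c : Sequent,
      π.node c = some (s_c, RuleTag.box) ∧
      (π.node (c ++ [false])).map Prod.fst = some (T s_c) with hD
  have hTroot : T (rootSeq π) = (Γ, B ::ₘ Δ) := by
    rw [hroot, hT]
    simp only []
    rw [Multiset.erase_cons_head]
  by_cases hD0 : D []
  · obtain ⟨s₀, h₀, h₁⟩ := hD0
    obtain ⟨rc, hn1⟩ := map_fst_some h₁
    have hrs : rootSeq π = s₀ := rootSeq_eq π h₀
    have hprov := provable_sub π [false] hn1
    rw [← hTroot, hrs]
    exact hprov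
  · set E : List Bool → Bool → Prop := fun q i => (∃ s_c r_c,
        π.node (q ++ [i]) = some (s_c, r_c) ∧ t ∈ s_c.2 ∧ ¬ D (q ++ [i]))
        ∧ ¬ (i = true ∧ isBox q) with hE
    set spec : List Bool → Bool → Option Sequent := fun q i =>
      (π.node (q ++ [i])).map (fun x => if i = true ∧ isBox q then x.1 else T x.1) with hspec
    have hinv : ∀ p s r, actOf E p → π.node p = some (s, r) → t ∈ s.2 ∧ ¬ D p := by
      intro p s r hp hn
      rcases List.eq_nil_or_concat p with rfl | ⟨q, i, rfl⟩
      · have hs : s = (Γ, t ::ₘ Δ) := by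
          rw [← hroot]; exact (rootSeq_eq π hn).symm
        rw [hs]
        exact ⟨Multiset.mem_cons_self _ _, hD0⟩
      · rw [List.concat_eq_append] at hp hn
        obtain ⟨⟨s_c, r_c, hnode, hmem, hnD⟩, -⟩ := ((actOf_concat q i).mp hp).2
        rw [hn] at hnode
        obtain ⟨hs, -⟩ := Prod.mk.inj (Option.some_inj.mp hnode)
        rw [List.concat_eq_append]
        exact ⟨hs ▸ hmem, hnD⟩
    have hbuild := build π T E spec ?_ ?_ ?_ ?_ ?_
    · rwa [hTroot] at hbuild
    · rintro p i ⟨⟨s_c, r_c, hn, -, -⟩, -⟩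
      rw [hn]; rfl
    · intro p i _ _
      rw [hspec]
      simp only [Option.isSome_map]
    · rintro p i s_c r_c hp ⟨⟨s_c', r_c', hn', hmem', -⟩, hnbr⟩ hn
      rw [hn] at hn'
      obtain ⟨hs, -⟩ := Prod.mk.inj (Option.some_inj.mp hn')
      subst hs
      rw [hspec]
      simp only [hn, Option.map_some]
      rw [if_neg hnbr]
    · intro p i s' hp hnE hsome hs'
      obtain ⟨⟨s_c, r_c⟩, hn⟩ := Option.isSome_iff_exists.mp hsome
      rw [hspec] at hs'
      simp only [hn, Option.map_some] at hs'
      by_cases hbr : i = true ∧ isBox p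
      · rw [if_pos hbr] at hs'
        rw [← Option.some_inj.mp hs']
        exact provable_sub π (p ++ [i]) hn
      · rw [if_neg hbr] at hs'
        rw [← Option.some_inj.mp hs']
        by_cases hDc : D (p ++ [i])
        · obtain ⟨s_c', hc', hfst⟩ := hDc
          rw [hn] at hc'
          obtain ⟨hs, -⟩ := Prod.mk.inj (Option.some_inj.mp hc')
          subst hs
          obtain ⟨rc', hn''⟩ := map_fst_some hfst
          exact provable_sub π ((p ++ [i]) ++ [false]) hn''
        · exfalso
          have hmemc : t ∉ s_c.2 := by
            intro hmemc
            exact hnE ⟨⟨s_c, r_c, hn, hmemc, hDc⟩, hbr⟩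
          have hpsome : (π.node p).isSome := node_isSome_of_append π p [i] (by rw [hn]; rfl)
          obtain ⟨⟨s, r⟩, hnp⟩ := Option.isSome_iff_exists.mp hpsome
          obtain ⟨hmem, hDp⟩ := hinv p s r hp hnp
          have hcor := π.correct p s r hnp
          generalize hc1 : (π.node (p ++ [false])).map Prod.fst = o1 at hcor
          generalize hc2 : (π.node (p ++ [true])).map Prod.fst = o2 at hcor
          cases hcor with
          | ax c Γ' Δ' v =>
            cases i
            · rcases h' : π.node (p ++ [false]) with _ | w
              · rw [h'] at hn; exact absurd hn (by simp)
              · rw [h'] at hc1; exact absurd hc1 (by simp)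
            · rcases h' : π.node (p ++ [true]) with _ | w
              · rw [h'] at hn; exact absurd hn (by simp)
              · rw [h'] at hc2; exact absurd hc2 (by simp)
          | axBot c Γ' Δ' =>
            cases i
            · rcases h' : π.node (p ++ [false]) with _ | w
              · rw [h'] at hn; exact absurd hn (by simp)
              · rw [h'] at hc1; exact absurd hc1 (by simp)
            · rcases h' : π.node (p ++ [true]) with _ | w
              · rw [h'] at hn; exact absurd hn (by simp)
              · rw [h'] at hc2; exact absurd hc2 (by simp)
          | impL c Γ' Δ' a b =>
            cases i
            · obtain ⟨rc1, hn1⟩ := map_fst_some hc1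
              rw [hn] at hn1
              obtain ⟨hs, -⟩ := Prod.mk.inj (Option.some_inj.mp hn1)
              rw [hs] at hmemc
              exact hmemc hmem
            · obtain ⟨rc2, hn2⟩ := map_fst_some hc2
              rw [hn] at hn2
              obtain ⟨hs, -⟩ := Prod.mk.inj (Option.some_inj.mp hn2)
              rw [hs] at hmemc
              exact hmemc (Multiset.mem_cons_of_mem hmem)
          | impR c Γ' Δ' a b =>
            have htg : t ∈ Δ' := by
              rcases Multiset.mem_cons.mp hmem with h' | h'
              · exact absurd h' (by rw [htdef]; simp)
              · exact h'
            cases i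
            · obtain ⟨rc1, hn1⟩ := map_fst_some hc1
              rw [hn] at hn1
              obtain ⟨hs, -⟩ := Prod.mk.inj (Option.some_inj.mp hn1)
              rw [hs] at hmemc
              exact hmemc (Multiset.mem_cons_of_mem htg)
            · rcases h' : π.node (p ++ [true]) with _ | w
              · rw [h'] at hn; exact absurd hn (by simp)
              · rw [h'] at hc2; exact absurd hc2 (by simp)
          | refl c Γ' Δ' b =>
            cases i
            · obtain ⟨rc1, hn1⟩ := map_fst_some hc1
              rw [hn] at hn1
              obtain ⟨hs, -⟩ := Prod.mk.inj (Option.some_inj.mp hn1)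
              rw [hs] at hmemc
              exact hmemc hmem
            · rcases h' : π.node (p ++ [true]) with _ | w
              · rw [h'] at hn; exact absurd hn (by simp)
              · rw [h'] at hc2; exact absurd hc2 (by simp)
          | box c Γ₀ Φ Δ' a =>
            cases i
            · rcases eq_or_ne (Fml.box a) t with heq | hne
              · apply hDp
                refine ⟨(Γ₀ + Φ.map Fml.box, Fml.box a ::ₘ Δ'), hnp, ?_⟩
                rw [hc1]
                congr 1
                rw [hT]; simp only []
                rw [heq, Multiset.erase_cons_head]
                have ha : a = B := Fml.box.inj (htdef ▸ heq)
                rw [ha]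
              · have htg : t ∈ Δ' := by
                  rcases Multiset.mem_cons.mp hmem with h' | h'
                  · exact absurd h'.symm hne
                  · exact h'
                obtain ⟨rc1, hn1⟩ := map_fst_some hc1
                rw [hn] at hn1
                obtain ⟨hs, -⟩ := Prod.mk.inj (Option.some_inj.mp hn1)
                rw [hs] at hmemc
                exact hmemc (Multiset.mem_cons_of_mem htg)
            · exact hbr ⟨rfl, ⟨(Γ₀ + Φ.map Fml.box, Fml.box a ::ₘ Δ'), hnp⟩⟩
    · intro p s r hp hn
      obtain ⟨hmem, hDp⟩ := hinv p s r hp hn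
      have hcor := π.correct p s r hn
      have hsp : ∀ i v rc, π.node (p ++ [i]) = some (v, rc) →
          spec p i = some (if i = true ∧ isBox p then v else T v) := by
        intro i v rc hni
        rw [hspec]; simp only [hni, Option.map_some]
      have hspn : ∀ i, π.node (p ++ [i]) = none → spec p i = none := by
        intro i hni
        rw [hspec]; simp only [hni, Option.map_none]
      generalize hc1 : (π.node (p ++ [false])).map Prod.fst = o1 at hcor
      generalize hc2 : (π.node (p ++ [true])).map Prod.fst = o2 at hcor
      cases hcor with
      | ax c Γ' Δ' v =>
        have hn1 : π.node (p ++ [false]) = none := by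
          rcases h' : π.node (p ++ [false]) with _ | w
          · rfl
          · rw [h'] at hc1; exact absurd hc1 (by simp)
        have hn2 : π.node (p ++ [true]) = none := by
          rcases h' : π.node (p ++ [true]) with _ | w
          · rfl
          · rw [h'] at hc2; exact absurd hc2 (by simp)
        rw [hspn false hn1, hspn true hn2]
        have hmem' : t ∈ Δ' := by
          rcases Multiset.mem_cons.mp hmem with h' | h'
          · exact absurd h' (by rw [htdef]; simp)
          · exact h'
        have e1 : T (Fml.var v ::ₘ Γ', Fml.var v ::ₘ Δ')
            = (Fml.var v ::ₘ Γ', Fml.var v ::ₘ B ::ₘ Δ'.erase t) := by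
          rw [hT]; simp only []
          rw [erase_cons_of_mem hmem', Multiset.cons_swap B (Fml.var v)]
        rw [e1]
        exact Rules.ax false _ _ v
      | axBot c Γ' Δ' =>
        have hn1 : π.node (p ++ [false]) = none := by
          rcases h' : π.node (p ++ [false]) with _ | w
          · rfl
          · rw [h'] at hc1; exact absurd hc1 (by simp)
        have hn2 : π.node (p ++ [true]) = none := by
          rcases h' : π.node (p ++ [true]) with _ | w
          · rfl
          · rw [h'] at hc2; exact absurd hc2 (by simp)
        rw [hspn false hn1, hspn true hn2]
        have e1 : T (Fml.bot ::ₘ Γ', Δ') = (Fml.bot ::ₘ Γ', B ::ₘ Δ'.erase t) := by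
          rw [hT]
        rw [e1]
        exact Rules.axBot false _ _
      | impL c Γ' Δ' a b =>
        obtain ⟨rc1, hn1⟩ := map_fst_some hc1
        obtain ⟨rc2, hn2⟩ := map_fst_some hc2
        have hnb : ¬ isBox p := by
          rintro ⟨sq, hq⟩
          rw [hn] at hq
          obtain ⟨-, h2⟩ := Prod.mk.inj (Option.some_inj.mp hq)
          exact RuleTag.noConfusion h2
        rw [hsp false _ _ hn1, hsp true _ _ hn2]
        rw [if_neg (by rintro ⟨h', -⟩; exact Bool.noConfusion h'),
          if_neg (by rintro ⟨-, h'⟩; exact hnb h')]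
        have e1 : T (Fml.imp a b ::ₘ Γ', Δ')
            = (Fml.imp a b ::ₘ Γ', B ::ₘ Δ'.erase t) := by
          rw [hT]
        have e2 : T (b ::ₘ Γ', Δ') = (b ::ₘ Γ', B ::ₘ Δ'.erase t) := by
          rw [hT]
        have e3 : T (Γ', a ::ₘ Δ') = (Γ', a ::ₘ B ::ₘ Δ'.erase t) := by
          rw [hT]; simp only []
          rw [erase_cons_of_mem hmem, Multiset.cons_swap B a]
        rw [e1, e2, e3]
        exact Rules.impL false _ _ a b
      | impR c Γ' Δ' a b =>
        obtain ⟨rc1, hn1⟩ := map_fst_some hc1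
        have hn2 : π.node (p ++ [true]) = none := by
          rcases h' : π.node (p ++ [true]) with _ | w
          · rfl
          · rw [h'] at hc2; exact absurd hc2 (by simp)
        have htg : t ∈ Δ' := by
          rcases Multiset.mem_cons.mp hmem with h' | h'
          · exact absurd h' (by rw [htdef]; simp)
          · exact h'
        rw [hsp false _ _ hn1, hspn true hn2]
        rw [if_neg (by rintro ⟨h', -⟩; exact Bool.noConfusion h')]
        have e1 : T (Γ', Fml.imp a b ::ₘ Δ')
            = (Γ', Fml.imp a b ::ₘ B ::ₘ Δ'.erase t) := by
          rw [hT]; simp only []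
          rw [erase_cons_of_mem htg, Multiset.cons_swap B (Fml.imp a b)]
        have e2 : T (a ::ₘ Γ', b ::ₘ Δ')
            = (a ::ₘ Γ', b ::ₘ B ::ₘ Δ'.erase t) := by
          rw [hT]; simp only []
          rw [erase_cons_of_mem htg, Multiset.cons_swap B b]
        rw [e1, e2]
        exact Rules.impR false _ _ a b
      | refl c Γ' Δ' b =>
        obtain ⟨rc1, hn1⟩ := map_fst_some hc1
        have hn2 : π.node (p ++ [true]) = none := by
          rcases h' : π.node (p ++ [true]) with _ | w
          · rfl
          · rw [h'] at hc2; exact absurd hc2 (by simp)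
        rw [hsp false _ _ hn1, hspn true hn2]
        rw [if_neg (by rintro ⟨h', -⟩; exact Bool.noConfusion h')]
        have e1 : T (Fml.box b ::ₘ Γ', Δ')
            = (Fml.box b ::ₘ Γ', B ::ₘ Δ'.erase t) := by
          rw [hT]
        have e2 : T (b ::ₘ Fml.box b ::ₘ Γ', Δ')
            = (b ::ₘ Fml.box b ::ₘ Γ', B ::ₘ Δ'.erase t) := by
          rw [hT]
        rw [e1, e2]
        exact Rules.refl false _ _ b
      | box c Γ₀ Φ Δ' a =>
        obtain ⟨rc1, hn1⟩ := map_fst_some hc1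
        obtain ⟨rc2, hn2⟩ := map_fst_some hc2
        have hb : isBox p := ⟨(Γ₀ + Φ.map Fml.box, Fml.box a ::ₘ Δ'), hn⟩
        rcases eq_or_ne (Fml.box a) t with heq | hne
        · exfalso
          apply hDp
          refine ⟨(Γ₀ + Φ.map Fml.box, Fml.box a ::ₘ Δ'), hn, ?_⟩
          rw [hc1]
          congr 1
          rw [hT]; simp only []
          rw [heq, Multiset.erase_cons_head]
          have ha : a = B := Fml.box.inj (htdef ▸ heq)
          rw [ha]
        · have htg : t ∈ Δ' := by
            rcases Multiset.mem_cons.mp hmem with h' | h'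
            · exact absurd h'.symm hne
            · exact h'
          rw [hsp false _ _ hn1, hsp true _ _ hn2]
          rw [if_neg (by rintro ⟨h', -⟩; exact Bool.noConfusion h'), if_pos ⟨rfl, hb⟩]
          have e1 : T (Γ₀ + Φ.map Fml.box, Fml.box a ::ₘ Δ')
              = (Γ₀ + Φ.map Fml.box, Fml.box a ::ₘ B ::ₘ Δ'.erase t) := by
            rw [hT]; simp only []
            rw [erase_cons_of_mem htg, Multiset.cons_swap B (Fml.box a)]
          have e2 : T (Γ₀ + Φ.map Fml.box, a ::ₘ Δ')
              = (Γ₀ + Φ.map Fml.box, a ::ₘ B ::ₘ Δ'.erase t) := by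
            rw [hT]; simp only []
            rw [erase_cons_of_mem htg, Multiset.cons_swap B a]
          rw [e1, e2]
          exact Rules.box false _ _ _ a

end GrzAux
namespace GrzAux

open Multiset

def fsize : Fml → ℕ
  | .bot => 1
  | .var _ => 1
  | .imp a b => fsize a + fsize b + 1
  | .box a => fsize a + 1

lemma imp_ne_right (a b : Fml) : Fml.imp a b ≠ b := by
  intro h
  have := congrArg fsize h
  simp only [fsize] at this
  omega

lemma box_ne (a : Fml) : Fml.box a ≠ a := by
  intro h
  have := congrArg fsize h
  simp only [fsize] at this
  omega

lemma mem_tail_of_two_le {A x : Fml} {Γ : Multiset Fml} (h : 2 ≤ count A (x ::ₘ Γ)) :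
    A ∈ Γ := by
  rw [Multiset.count_cons] at h
  refine Multiset.one_le_count_iff_mem.mp ?_
  split_ifs at h <;> omega

def ConL (A : Fml) : Prop :=
  ∀ Γ Δ : Multiset Fml, ProvableInf false (A ::ₘ A ::ₘ Γ, Δ) → ProvableInf false (A ::ₘ Γ, Δ)

def ConR (A : Fml) : Prop :=
  ∀ Γ Δ : Multiset Fml, ProvableInf false (Γ, A ::ₘ A ::ₘ Δ) → ProvableInf false (Γ, A ::ₘ Δ)

lemma conL_aux (A : Fml)
    (hIH : ∀ X' Y', A = Fml.imp X' Y' → ConL Y' ∧ ConR X') : ConL A := by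
  intro Γ Δ h
  classical
  obtain ⟨π, hroot⟩ := h
  set T : Sequent → Sequent := fun s => (s.1.erase A, s.2) with hT
  set isBox : List Bool → Prop := fun q => ∃ sq, π.node q = some (sq, RuleTag.box) with hisBox
  have hTroot : T (rootSeq π) = (A ::ₘ Γ, Δ) := by
    rw [hroot, hT]
    simp only []
    rw [Multiset.erase_cons_head]
  set E : List Bool → Bool → Prop := fun q i => ∃ s_c r_c,
      π.node (q ++ [i]) = some (s_c, r_c) ∧ 2 ≤ count A s_c.1 with hE
  set spec : List Bool → Bool → Option Sequent := fun q i =>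
    (π.node (q ++ [i])).map
      (fun x => if i = true ∧ isBox q ∧ count A x.1.1 < 2 then x.1 else T x.1) with hspec
  have hinv : ∀ p s r, actOf E p → π.node p = some (s, r) → 2 ≤ count A s.1 := by
    intro p s r hp hn
    rcases List.eq_nil_or_concat p with rfl | ⟨q, i, rfl⟩
    · have hs : s = (A ::ₘ A ::ₘ Γ, Δ) := by
        rw [← hroot]; exact (rootSeq_eq π hn).symm
      rw [hs]
      show 2 ≤ count A (A ::ₘ A ::ₘ Γ)
      rw [Multiset.count_cons_self, Multiset.count_cons_self]
      omega
    · rw [List.concat_eq_append] at hp hn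
      obtain ⟨s_c, r_c, hnode, hcnt⟩ := ((actOf_concat q i).mp hp).2
      rw [hn] at hnode
      obtain ⟨hs, -⟩ := Prod.mk.inj (Option.some_inj.mp hnode)
      exact hs ▸ hcnt
  have hbuild := build π T E spec ?_ ?_ ?_ ?_ ?_
  · rwa [hTroot] at hbuild
  · rintro p i ⟨s_c, r_c, hn, -⟩
    rw [hn]; rfl
  · intro p i _ _
    rw [hspec]
    simp only [Option.isSome_map]
  · rintro p i s_c r_c hp ⟨s_c', r_c', hn', hcnt'⟩ hn
    rw [hn] at hn'
    obtain ⟨hs, -⟩ := Prod.mk.inj (Option.some_inj.mp hn')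
    subst hs
    rw [hspec]
    simp only [hn, Option.map_some]
    rw [if_neg (by rintro ⟨-, -, h'⟩; have h'' : count A s_c.1 < 2 := h'; omega)]
  · -- horc
    intro p i s' hp hnE hsome hs'
    obtain ⟨⟨s_c, r_c⟩, hn⟩ := Option.isSome_iff_exists.mp hsome
    rw [hspec] at hs'
    simp only [hn, Option.map_some] at hs'
    have hcnt : count A s_c.1 < 2 := by
      by_contra hc
      exact hnE ⟨s_c, r_c, hn, by omega⟩
    by_cases hbr : i = true ∧ isBox p
    · rw [if_pos ⟨hbr.1, hbr.2, hcnt⟩] at hs'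
      rw [← Option.some_inj.mp hs']
      exact provable_sub π (p ++ [i]) hn
    · rw [if_neg (by rintro ⟨h1, h2, -⟩; exact hbr ⟨h1, h2⟩)] at hs'
      rw [← Option.some_inj.mp hs']
      have hpsome : (π.node p).isSome := node_isSome_of_append π p [i] (by rw [hn]; rfl)
      obtain ⟨⟨s, r⟩, hnp⟩ := Option.isSome_iff_exists.mp hpsome
      have hm2 := hinv p s r hp hnp
      have hcor := π.correct p s r hnp
      generalize hc1 : (π.node (p ++ [false])).map Prod.fst = o1 at hcor
      generalize hc2 : (π.node (p ++ [true])).map Prod.fst = o2 at hcor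
      cases hcor with
      | ax c Γ' Δ' v =>
        exfalso
        cases i
        · rcases h' : π.node (p ++ [false]) with _ | w
          · rw [h'] at hn; exact absurd hn (by simp)
          · rw [h'] at hc1; exact absurd hc1 (by simp)
        · rcases h' : π.node (p ++ [true]) with _ | w
          · rw [h'] at hn; exact absurd hn (by simp)
          · rw [h'] at hc2; exact absurd hc2 (by simp)
      | axBot c Γ' Δ' =>
        exfalso
        cases i
        · rcases h' : π.node (p ++ [false]) with _ | w
          · rw [h'] at hn; exact absurd hn (by simp)
          · rw [h'] at hc1; exact absurd hc1 (by simp)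
        · rcases h' : π.node (p ++ [true]) with _ | w
          · rw [h'] at hn; exact absurd hn (by simp)
          · rw [h'] at hc2; exact absurd hc2 (by simp)
      | impL c Γ' Δ' a b =>
        have hm2' : 2 ≤ count A (Fml.imp a b ::ₘ Γ') := hm2
        rcases eq_or_ne (Fml.imp a b) A with heq | hne
        · -- principal is A; use inversions and the induction hypotheses
          have hXY : A = Fml.imp a b := heq.symm
          have hcntΓ' : 1 ≤ count A Γ' := by
            rw [Multiset.count_cons, if_pos hXY] at hm2'
            omega
          cases i
          · -- left premise
            obtain ⟨rc1, hn1⟩ := map_fst_some hc1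
            rw [hn] at hn1
            obtain ⟨hs, -⟩ := Prod.mk.inj (Option.some_inj.mp hn1)
            subst hs
            have hcnt' : count A (b ::ₘ Γ') < 2 := hcnt
            have hbA : b ≠ A := fun h' => imp_ne_right a b (h'.trans hXY).symm
            have hcg : count A Γ' = 1 := by
              rw [Multiset.count_cons, if_neg (fun h' => hbA h'.symm)] at hcnt'
              omega
            have hmg : A ∈ Γ' := Multiset.one_le_count_iff_mem.mp (by omega)
            have hsub := provable_sub π (p ++ [false]) hn
            have hre : (b ::ₘ Γ' : Multiset Fml)
                = Fml.imp a b ::ₘ b ::ₘ Γ'.erase A := by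
              conv_lhs => rw [← Multiset.cons_erase hmg]
              rw [Multiset.cons_swap, hXY]
            rw [hre] at hsub
            have hinv1 := inv1 a b _ _ hsub
            have hcon := (hIH a b hXY).1 _ _ hinv1
            have he : T (b ::ₘ Γ', Δ') = (b ::ₘ Γ'.erase A, Δ') := by
              rw [hT]; simp only []
              rw [erase_cons_of_mem hmg]
            rw [he]
            exact hcon
          · -- right premise
            obtain ⟨rc2, hn2⟩ := map_fst_some hc2
            rw [hn] at hn2
            obtain ⟨hs, -⟩ := Prod.mk.inj (Option.some_inj.mp hn2)
            subst hs
            have hcnt' : count A Γ' < 2 := hcnt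
            have hcg : count A Γ' = 1 := by omega
            have hmg : A ∈ Γ' := Multiset.one_le_count_iff_mem.mp (by omega)
            have hsub := provable_sub π (p ++ [true]) hn
            have hre : Γ' = Fml.imp a b ::ₘ Γ'.erase A := by
              conv_lhs => rw [← Multiset.cons_erase hmg]
              rw [hXY]
            rw [hre] at hsub
            have hinv2 := inv2 a b _ _ hsub
            have hcon := (hIH a b hXY).2 _ _ hinv2
            have he : T (Γ', a ::ₘ Δ') = (Γ'.erase A, a ::ₘ Δ') := by
              rw [hT]
            rw [he]
            exact hcon
        · -- principal not A: counts cannot drop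
          exfalso
          have hcg : 2 ≤ count A Γ' := by
            rw [Multiset.count_cons, if_neg (fun h' => hne h'.symm)] at hm2'
            omega
          cases i
          · obtain ⟨rc1, hn1⟩ := map_fst_some hc1
            rw [hn] at hn1
            obtain ⟨hs, -⟩ := Prod.mk.inj (Option.some_inj.mp hn1)
            rw [hs] at hcnt
            have hcnt' : count A (b ::ₘ Γ') < 2 := hcnt
            rw [Multiset.count_cons] at hcnt'
            split_ifs at hcnt' <;> omega
          · obtain ⟨rc2, hn2⟩ := map_fst_some hc2
            rw [hn] at hn2
            obtain ⟨hs, -⟩ := Prod.mk.inj (Option.some_inj.mp hn2)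
            rw [hs] at hcnt
            have hcnt' : count A Γ' < 2 := hcnt
            omega
      | impR c Γ' Δ' a b =>
        exfalso
        have hm2' : 2 ≤ count A Γ' := hm2
        cases i
        · obtain ⟨rc1, hn1⟩ := map_fst_some hc1
          rw [hn] at hn1
          obtain ⟨hs, -⟩ := Prod.mk.inj (Option.some_inj.mp hn1)
          rw [hs] at hcnt
          have hcnt' : count A (a ::ₘ Γ') < 2 := hcnt
          rw [Multiset.count_cons] at hcnt'
          split_ifs at hcnt' <;> omega
        · rcases h' : π.node (p ++ [true]) with _ | w
          · rw [h'] at hn; exact absurd hn (by simp)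
          · rw [h'] at hc2; exact absurd hc2 (by simp)
      | refl c Γ' Δ' b =>
        exfalso
        have hm2' : 2 ≤ count A (Fml.box b ::ₘ Γ') := hm2
        cases i
        · obtain ⟨rc1, hn1⟩ := map_fst_some hc1
          rw [hn] at hn1
          obtain ⟨hs, -⟩ := Prod.mk.inj (Option.some_inj.mp hn1)
          rw [hs] at hcnt
          have hcnt' : count A (b ::ₘ Fml.box b ::ₘ Γ') < 2 := hcnt
          rw [Multiset.count_cons, Multiset.count_cons] at hcnt'
          rw [Multiset.count_cons] at hm2'
          split_ifs at hcnt' hm2' <;> omega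
        · rcases h' : π.node (p ++ [true]) with _ | w
          · rw [h'] at hn; exact absurd hn (by simp)
          · rw [h'] at hc2; exact absurd hc2 (by simp)
      | box c Γ₀ Φ Δ' a =>
        exfalso
        have hm2' : 2 ≤ count A (Γ₀ + Φ.map Fml.box) := hm2
        cases i
        · obtain ⟨rc1, hn1⟩ := map_fst_some hc1
          rw [hn] at hn1
          obtain ⟨hs, -⟩ := Prod.mk.inj (Option.some_inj.mp hn1)
          rw [hs] at hcnt
          have hcnt' : count A (Γ₀ + Φ.map Fml.box) < 2 := hcnt
          omega
        · exact hbr ⟨rfl, ⟨(Γ₀ + Φ.map Fml.box, Fml.box a ::ₘ Δ'), hnp⟩⟩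
  · -- hrules
    intro p s r hp hn
    have hm2 := hinv p s r hp hn
    have hcor := π.correct p s r hn
    have hsp : ∀ i v rc, π.node (p ++ [i]) = some (v, rc) →
        spec p i = some (if i = true ∧ isBox p ∧ count A v.1 < 2 then v else T v) := by
      intro i v rc hni
      rw [hspec]; simp only [hni, Option.map_some]
    have hspn : ∀ i, π.node (p ++ [i]) = none → spec p i = none := by
      intro i hni
      rw [hspec]; simp only [hni, Option.map_none]
    generalize hc1 : (π.node (p ++ [false])).map Prod.fst = o1 at hcor
    generalize hc2 : (π.node (p ++ [true])).map Prod.fst = o2 at hcor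
    cases hcor with
    | ax c Γ' Δ' v =>
      have hn1 : π.node (p ++ [false]) = none := by
        rcases h' : π.node (p ++ [false]) with _ | w
        · rfl
        · rw [h'] at hc1; exact absurd hc1 (by simp)
      have hn2 : π.node (p ++ [true]) = none := by
        rcases h' : π.node (p ++ [true]) with _ | w
        · rfl
        · rw [h'] at hc2; exact absurd hc2 (by simp)
      rw [hspn false hn1, hspn true hn2]
      have hmg : A ∈ Γ' := mem_tail_of_two_le (show 2 ≤ count A _ from hm2)
      have e1 : T (Fml.var v ::ₘ Γ', Fml.var v ::ₘ Δ')
          = (Fml.var v ::ₘ Γ'.erase A, Fml.var v ::ₘ Δ') := by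
        rw [hT]; simp only []
        rw [erase_cons_of_mem hmg]
      rw [e1]
      exact Rules.ax false _ _ v
    | axBot c Γ' Δ' =>
      have hn1 : π.node (p ++ [false]) = none := by
        rcases h' : π.node (p ++ [false]) with _ | w
        · rfl
        · rw [h'] at hc1; exact absurd hc1 (by simp)
      have hn2 : π.node (p ++ [true]) = none := by
        rcases h' : π.node (p ++ [true]) with _ | w
        · rfl
        · rw [h'] at hc2; exact absurd hc2 (by simp)
      rw [hspn false hn1, hspn true hn2]
      have hmg : A ∈ Γ' := mem_tail_of_two_le (show 2 ≤ count A _ from hm2)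
      have e1 : T (Fml.bot ::ₘ Γ', Δ') = (Fml.bot ::ₘ Γ'.erase A, Δ') := by
        rw [hT]; simp only []
        rw [erase_cons_of_mem hmg]
      rw [e1]
      exact Rules.axBot false _ _
    | impL c Γ' Δ' a b =>
      obtain ⟨rc1, hn1⟩ := map_fst_some hc1
      obtain ⟨rc2, hn2⟩ := map_fst_some hc2
      have hnb : ¬ isBox p := by
        rintro ⟨sq, hq⟩
        rw [hn] at hq
        obtain ⟨-, h2⟩ := Prod.mk.inj (Option.some_inj.mp hq)
        exact RuleTag.noConfusion h2
      rw [hsp false _ _ hn1, hsp true _ _ hn2]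
      rw [if_neg (by rintro ⟨h', -⟩; exact Bool.noConfusion h'),
        if_neg (by rintro ⟨-, h', -⟩; exact hnb h')]
      have hmg : A ∈ Γ' := mem_tail_of_two_le (show 2 ≤ count A _ from hm2)
      have e1 : T (Fml.imp a b ::ₘ Γ', Δ') = (Fml.imp a b ::ₘ Γ'.erase A, Δ') := by
        rw [hT]; simp only []
        rw [erase_cons_of_mem hmg]
      have e2 : T (b ::ₘ Γ', Δ') = (b ::ₘ Γ'.erase A, Δ') := by
        rw [hT]; simp only []
        rw [erase_cons_of_mem hmg]
      have e3 : T (Γ', a ::ₘ Δ') = (Γ'.erase A, a ::ₘ Δ') := by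
        rw [hT]
      rw [e1, e2, e3]
      exact Rules.impL false _ _ a b
    | impR c Γ' Δ' a b =>
      obtain ⟨rc1, hn1⟩ := map_fst_some hc1
      have hn2 : π.node (p ++ [true]) = none := by
        rcases h' : π.node (p ++ [true]) with _ | w
        · rfl
        · rw [h'] at hc2; exact absurd hc2 (by simp)
      rw [hsp false _ _ hn1, hspn true hn2]
      rw [if_neg (by rintro ⟨h', -⟩; exact Bool.noConfusion h')]
      have hm2' : 2 ≤ count A Γ' := hm2
      have hmg : A ∈ Γ' := Multiset.one_le_count_iff_mem.mp (by omega)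
      have e1 : T (Γ', Fml.imp a b ::ₘ Δ') = (Γ'.erase A, Fml.imp a b ::ₘ Δ') := by
        rw [hT]
      have e2 : T (a ::ₘ Γ', b ::ₘ Δ') = (a ::ₘ Γ'.erase A, b ::ₘ Δ') := by
        rw [hT]; simp only []
        rw [erase_cons_of_mem hmg]
      rw [e1, e2]
      exact Rules.impR false _ _ a b
    | refl c Γ' Δ' b =>
      obtain ⟨rc1, hn1⟩ := map_fst_some hc1
      have hn2 : π.node (p ++ [true]) = none := by
        rcases h' : π.node (p ++ [true]) with _ | w
        · rfl
        · rw [h'] at hc2; exact absurd hc2 (by simp)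
      rw [hsp false _ _ hn1, hspn true hn2]
      rw [if_neg (by rintro ⟨h', -⟩; exact Bool.noConfusion h')]
      have hmg : A ∈ Γ' := mem_tail_of_two_le (show 2 ≤ count A _ from hm2)
      have e1 : T (Fml.box b ::ₘ Γ', Δ') = (Fml.box b ::ₘ Γ'.erase A, Δ') := by
        rw [hT]; simp only []
        rw [erase_cons_of_mem hmg]
      have e2 : T (b ::ₘ Fml.box b ::ₘ Γ', Δ')
          = (b ::ₘ Fml.box b ::ₘ Γ'.erase A, Δ') := by
        rw [hT]; simp only []
        rw [erase_cons_of_mem (Multiset.mem_cons_of_mem hmg), erase_cons_of_mem hmg]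
      rw [e1, e2]
      exact Rules.refl false _ _ b
    | box c Γ₀ Φ Δ' a =>
      obtain ⟨rc1, hn1⟩ := map_fst_some hc1
      obtain ⟨rc2, hn2⟩ := map_fst_some hc2
      have hb : isBox p := ⟨(Γ₀ + Φ.map Fml.box, Fml.box a ::ₘ Δ'), hn⟩
      rw [hsp false _ _ hn1, hsp true _ _ hn2]
      rw [if_neg (by rintro ⟨h', -⟩; exact Bool.noConfusion h')]
      have hm2' : 2 ≤ count A Γ₀ + count A (Φ.map Fml.box) := by
        have h0 : 2 ≤ count A (Γ₀ + Φ.map Fml.box) := hm2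
        rwa [Multiset.count_add] at h0
      by_cases hcnt : 2 ≤ count A (Φ.map Fml.box)
      · -- A occurs at least twice among the boxed formulas
        have hmA : A ∈ Φ.map Fml.box := Multiset.one_le_count_iff_mem.mp (by omega)
        obtain ⟨w, hw, hwA⟩ := Multiset.mem_map.mp hmA
        have hwΦ : w ∈ Φ := hw
        have hcw : Fml.box w = A := hwA
        have hmapE : (Φ.erase w).map Fml.box = (Φ.map Fml.box).erase A := by
          rw [Multiset.map_erase Fml.box box_inj w Φ, hcw]
        have hsum : (Γ₀ + Φ.map Fml.box).erase A = Γ₀ + (Φ.erase w).map Fml.box := by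
          rw [hmapE]
          exact Multiset.erase_add_right_pos _ hmA
        rw [if_neg (by
          rintro ⟨-, -, h'⟩
          have h'' : count A (Φ.map Fml.box) < 2 := h'
          omega)]
        have e1 : T (Γ₀ + Φ.map Fml.box, Fml.box a ::ₘ Δ')
            = (Γ₀ + (Φ.erase w).map Fml.box, Fml.box a ::ₘ Δ') := by
          rw [hT]; simp only []
          rw [hsum]
        have e2 : T (Γ₀ + Φ.map Fml.box, a ::ₘ Δ')
            = (Γ₀ + (Φ.erase w).map Fml.box, a ::ₘ Δ') := by
          rw [hT]; simp only []
          rw [hsum]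
        have e3 : T (Φ.map Fml.box, ({a} : Multiset Fml))
            = ((Φ.erase w).map Fml.box, ({a} : Multiset Fml)) := by
          rw [hT]; simp only []
          rw [hmapE]
        rw [e1, e2, e3]
        exact Rules.box false _ _ _ a
      · -- A occurs in the unboxed part
        have hmg : A ∈ Γ₀ := Multiset.one_le_count_iff_mem.mp (by omega)
        have hsum : (Γ₀ + Φ.map Fml.box).erase A = Γ₀.erase A + Φ.map Fml.box :=
          Multiset.erase_add_left_pos _ hmg
        rw [if_pos ⟨rfl, hb, show count A (Φ.map Fml.box) < 2 by omega⟩]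
        have e1 : T (Γ₀ + Φ.map Fml.box, Fml.box a ::ₘ Δ')
            = (Γ₀.erase A + Φ.map Fml.box, Fml.box a ::ₘ Δ') := by
          rw [hT]; simp only []
          rw [hsum]
        have e2 : T (Γ₀ + Φ.map Fml.box, a ::ₘ Δ')
            = (Γ₀.erase A + Φ.map Fml.box, a ::ₘ Δ') := by
          rw [hT]; simp only []
          rw [hsum]
        rw [e1, e2]
        exact Rules.box false _ _ _ a

end GrzAux
namespace GrzAux

open Multiset

lemma conR_aux (A : Fml)
    (hImp : ∀ X' Y', A = Fml.imp X' Y' → ConL X' ∧ ConR Y')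
    (hBox : ∀ B', A = Fml.box B' → ConR B') : ConR A := by
  intro Γ Δ h
  classical
  obtain ⟨π, hroot⟩ := h
  set T : Sequent → Sequent := fun s => (s.1, s.2.erase A) with hT
  set isBox : List Bool → Prop := fun q => ∃ sq, π.node q = some (sq, RuleTag.box) with hisBox
  have hTroot : T (rootSeq π) = (Γ, A ::ₘ Δ) := by
    rw [hroot, hT]
    simp only []
    rw [Multiset.erase_cons_head]
  set E : List Bool → Bool → Prop := fun q i => (∃ s_c r_c,
      π.node (q ++ [i]) = some (s_c, r_c) ∧ 2 ≤ count A s_c.2)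
      ∧ ¬ (i = true ∧ isBox q) with hE
  set spec : List Bool → Bool → Option Sequent := fun q i =>
    (π.node (q ++ [i])).map (fun x => if i = true ∧ isBox q then x.1 else T x.1) with hspec
  have hinv : ∀ p s r, actOf E p → π.node p = some (s, r) → 2 ≤ count A s.2 := by
    intro p s r hp hn
    rcases List.eq_nil_or_concat p with rfl | ⟨q, i, rfl⟩
    · have hs : s = (Γ, A ::ₘ A ::ₘ Δ) := by
        rw [← hroot]; exact (rootSeq_eq π hn).symm
      rw [hs]
      show 2 ≤ count A (A ::ₘ A ::ₘ Δ)
      rw [Multiset.count_cons_self, Multiset.count_cons_self]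
      omega
    · rw [List.concat_eq_append] at hp hn
      obtain ⟨⟨s_c, r_c, hnode, hcnt⟩, -⟩ := ((actOf_concat q i).mp hp).2
      rw [hn] at hnode
      obtain ⟨hs, -⟩ := Prod.mk.inj (Option.some_inj.mp hnode)
      exact hs ▸ hcnt
  have hbuild := build π T E spec ?_ ?_ ?_ ?_ ?_
  · rwa [hTroot] at hbuild
  · rintro p i ⟨⟨s_c, r_c, hn, -⟩, -⟩
    rw [hn]; rfl
  · intro p i _ _
    rw [hspec]
    simp only [Option.isSome_map]
  · rintro p i s_c r_c hp ⟨⟨s_c', r_c', hn', hcnt'⟩, hnbr⟩ hn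
    rw [hn] at hn'
    obtain ⟨hs, -⟩ := Prod.mk.inj (Option.some_inj.mp hn')
    subst hs
    rw [hspec]
    simp only [hn, Option.map_some]
    rw [if_neg hnbr]
  · -- horc
    intro p i s' hp hnE hsome hs'
    obtain ⟨⟨s_c, r_c⟩, hn⟩ := Option.isSome_iff_exists.mp hsome
    rw [hspec] at hs'
    simp only [hn, Option.map_some] at hs'
    by_cases hbr : i = true ∧ isBox p
    · rw [if_pos hbr] at hs'
      rw [← Option.some_inj.mp hs']
      exact provable_sub π (p ++ [i]) hn
    · rw [if_neg hbr] at hs'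
      rw [← Option.some_inj.mp hs']
      have hcnt : count A s_c.2 < 2 := by
        by_contra hc
        exact hnE ⟨⟨s_c, r_c, hn, by omega⟩, hbr⟩
      have hpsome : (π.node p).isSome := node_isSome_of_append π p [i] (by rw [hn]; rfl)
      obtain ⟨⟨s, r⟩, hnp⟩ := Option.isSome_iff_exists.mp hpsome
      have hm2 := hinv p s r hp hnp
      have hcor := π.correct p s r hnp
      generalize hc1 : (π.node (p ++ [false])).map Prod.fst = o1 at hcor
      generalize hc2 : (π.node (p ++ [true])).map Prod.fst = o2 at hcor
      cases hcor with
      | ax c Γ' Δ' v =>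
        exfalso
        cases i
        · rcases h' : π.node (p ++ [false]) with _ | w
          · rw [h'] at hn; exact absurd hn (by simp)
          · rw [h'] at hc1; exact absurd hc1 (by simp)
        · rcases h' : π.node (p ++ [true]) with _ | w
          · rw [h'] at hn; exact absurd hn (by simp)
          · rw [h'] at hc2; exact absurd hc2 (by simp)
      | axBot c Γ' Δ' =>
        exfalso
        cases i
        · rcases h' : π.node (p ++ [false]) with _ | w
          · rw [h'] at hn; exact absurd hn (by simp)
          · rw [h'] at hc1; exact absurd hc1 (by simp)
        · rcases h' : π.node (p ++ [true]) with _ | w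
          · rw [h'] at hn; exact absurd hn (by simp)
          · rw [h'] at hc2; exact absurd hc2 (by simp)
      | impL c Γ' Δ' a b =>
        exfalso
        have hm2' : 2 ≤ count A Δ' := hm2
        cases i
        · obtain ⟨rc1, hn1⟩ := map_fst_some hc1
          rw [hn] at hn1
          obtain ⟨hs, -⟩ := Prod.mk.inj (Option.some_inj.mp hn1)
          rw [hs] at hcnt
          have hcnt' : count A Δ' < 2 := hcnt
          omega
        · obtain ⟨rc2, hn2⟩ := map_fst_some hc2
          rw [hn] at hn2
          obtain ⟨hs, -⟩ := Prod.mk.inj (Option.some_inj.mp hn2)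
          rw [hs] at hcnt
          have hcnt' : count A (a ::ₘ Δ') < 2 := hcnt
          rw [Multiset.count_cons] at hcnt'
          split_ifs at hcnt' <;> omega
      | impR c Γ' Δ' a b =>
        have hm2' : 2 ≤ count A (Fml.imp a b ::ₘ Δ') := hm2
        rcases eq_or_ne (Fml.imp a b) A with heq | hne
        · have hXY : A = Fml.imp a b := heq.symm
          cases i
          · obtain ⟨rc1, hn1⟩ := map_fst_some hc1
            rw [hn] at hn1
            obtain ⟨hs, -⟩ := Prod.mk.inj (Option.some_inj.mp hn1)
            subst hs
            have hcnt' : count A (b ::ₘ Δ') < 2 := hcnt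
            have hbA : b ≠ A := fun h' => imp_ne_right a b (h'.trans hXY).symm
            have hcntΔ' : 1 ≤ count A Δ' := by
              rw [Multiset.count_cons, if_pos hXY] at hm2'
              omega
            have hmg : A ∈ Δ' := Multiset.one_le_count_iff_mem.mp (by omega)
            have hsub := provable_sub π (p ++ [false]) hn
            have hre : (b ::ₘ Δ' : Multiset Fml)
                = Fml.imp a b ::ₘ b ::ₘ Δ'.erase A := by
              conv_lhs => rw [← Multiset.cons_erase hmg]
              rw [Multiset.cons_swap, hXY]
            rw [hre] at hsub
            have hinv3 := inv3 a b _ _ hsub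
            have hconL := (hImp a b hXY).1 _ _ hinv3
            have hconR := (hImp a b hXY).2 _ _ hconL
            have he : T (a ::ₘ Γ', b ::ₘ Δ') = (a ::ₘ Γ', b ::ₘ Δ'.erase A) := by
              rw [hT]; simp only []
              rw [erase_cons_of_mem hmg]
            rw [he]
            exact hconR
          · rcases h' : π.node (p ++ [true]) with _ | w
            · rw [h'] at hn; exact absurd hn (by simp)
            · rw [h'] at hc2; exact absurd hc2 (by simp)
        · exfalso
          have hcg : 2 ≤ count A Δ' := by
            rw [Multiset.count_cons, if_neg (fun h' => hne h'.symm)] at hm2'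
            omega
          cases i
          · obtain ⟨rc1, hn1⟩ := map_fst_some hc1
            rw [hn] at hn1
            obtain ⟨hs, -⟩ := Prod.mk.inj (Option.some_inj.mp hn1)
            rw [hs] at hcnt
            have hcnt' : count A (b ::ₘ Δ') < 2 := hcnt
            rw [Multiset.count_cons] at hcnt'
            split_ifs at hcnt' <;> omega
          · rcases h' : π.node (p ++ [true]) with _ | w
            · rw [h'] at hn; exact absurd hn (by simp)
            · rw [h'] at hc2; exact absurd hc2 (by simp)
      | refl c Γ' Δ' b =>
        exfalso
        have hm2' : 2 ≤ count A Δ' := hm2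
        cases i
        · obtain ⟨rc1, hn1⟩ := map_fst_some hc1
          rw [hn] at hn1
          obtain ⟨hs, -⟩ := Prod.mk.inj (Option.some_inj.mp hn1)
          rw [hs] at hcnt
          have hcnt' : count A Δ' < 2 := hcnt
          omega
        · rcases h' : π.node (p ++ [true]) with _ | w
          · rw [h'] at hn; exact absurd hn (by simp)
          · rw [h'] at hc2; exact absurd hc2 (by simp)
      | box c Γ₀ Φ Δ' a =>
        have hm2' : 2 ≤ count A (Fml.box a ::ₘ Δ') := hm2
        cases i
        · rcases eq_or_ne (Fml.box a) A with heq | hne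
          · have hXY : A = Fml.box a := heq.symm
            obtain ⟨rc1, hn1⟩ := map_fst_some hc1
            rw [hn] at hn1
            obtain ⟨hs, -⟩ := Prod.mk.inj (Option.some_inj.mp hn1)
            subst hs
            have hcnt' : count A (a ::ₘ Δ') < 2 := hcnt
            have haA : a ≠ A := fun h' => box_ne a (h'.trans hXY).symm
            have hcntΔ' : 1 ≤ count A Δ' := by
              rw [Multiset.count_cons, if_pos hXY] at hm2'
              omega
            have hmg : A ∈ Δ' := Multiset.one_le_count_iff_mem.mp (by omega)
            have hsub := provable_sub π (p ++ [false]) hn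
            have hre : (a ::ₘ Δ' : Multiset Fml)
                = Fml.box a ::ₘ a ::ₘ Δ'.erase A := by
              conv_lhs => rw [← Multiset.cons_erase hmg]
              rw [Multiset.cons_swap, hXY]
            rw [hre] at hsub
            have hinv4 := inv4 a _ _ hsub
            have hconR := (hBox a hXY) _ _ hinv4
            have he : T (Γ₀ + Φ.map Fml.box, a ::ₘ Δ')
                = (Γ₀ + Φ.map Fml.box, a ::ₘ Δ'.erase A) := by
              rw [hT]; simp only []
              rw [erase_cons_of_mem hmg]
            rw [he]
            exact hconR
          · exfalso
            have hcg : 2 ≤ count A Δ' := by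
              rw [Multiset.count_cons, if_neg (fun h' => hne h'.symm)] at hm2'
              omega
            obtain ⟨rc1, hn1⟩ := map_fst_some hc1
            rw [hn] at hn1
            obtain ⟨hs, -⟩ := Prod.mk.inj (Option.some_inj.mp hn1)
            rw [hs] at hcnt
            have hcnt' : count A (a ::ₘ Δ') < 2 := hcnt
            rw [Multiset.count_cons] at hcnt'
            split_ifs at hcnt' <;> omega
        · exact absurd ⟨rfl, ⟨(Γ₀ + Φ.map Fml.box, Fml.box a ::ₘ Δ'), hnp⟩⟩ hbr
  · -- hrules
    intro p s r hp hn
    have hm2 := hinv p s r hp hn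
    have hcor := π.correct p s r hn
    have hsp : ∀ i v rc, π.node (p ++ [i]) = some (v, rc) →
        spec p i = some (if i = true ∧ isBox p then v else T v) := by
      intro i v rc hni
      rw [hspec]; simp only [hni, Option.map_some]
    have hspn : ∀ i, π.node (p ++ [i]) = none → spec p i = none := by
      intro i hni
      rw [hspec]; simp only [hni, Option.map_none]
    generalize hc1 : (π.node (p ++ [false])).map Prod.fst = o1 at hcor
    generalize hc2 : (π.node (p ++ [true])).map Prod.fst = o2 at hcor
    cases hcor with
    | ax c Γ' Δ' v =>
      have hn1 : π.node (p ++ [false]) = none := by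
        rcases h' : π.node (p ++ [false]) with _ | w
        · rfl
        · rw [h'] at hc1; exact absurd hc1 (by simp)
      have hn2 : π.node (p ++ [true]) = none := by
        rcases h' : π.node (p ++ [true]) with _ | w
        · rfl
        · rw [h'] at hc2; exact absurd hc2 (by simp)
      rw [hspn false hn1, hspn true hn2]
      have hmg : A ∈ Δ' := mem_tail_of_two_le (show 2 ≤ count A _ from hm2)
      have e1 : T (Fml.var v ::ₘ Γ', Fml.var v ::ₘ Δ')
          = (Fml.var v ::ₘ Γ', Fml.var v ::ₘ Δ'.erase A) := by
        rw [hT]; simp only []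
        rw [erase_cons_of_mem hmg]
      rw [e1]
      exact Rules.ax false _ _ v
    | axBot c Γ' Δ' =>
      have hn1 : π.node (p ++ [false]) = none := by
        rcases h' : π.node (p ++ [false]) with _ | w
        · rfl
        · rw [h'] at hc1; exact absurd hc1 (by simp)
      have hn2 : π.node (p ++ [true]) = none := by
        rcases h' : π.node (p ++ [true]) with _ | w
        · rfl
        · rw [h'] at hc2; exact absurd hc2 (by simp)
      rw [hspn false hn1, hspn true hn2]
      have e1 : T (Fml.bot ::ₘ Γ', Δ') = (Fml.bot ::ₘ Γ', Δ'.erase A) := by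
        rw [hT]
      rw [e1]
      exact Rules.axBot false _ _
    | impL c Γ' Δ' a b =>
      obtain ⟨rc1, hn1⟩ := map_fst_some hc1
      obtain ⟨rc2, hn2⟩ := map_fst_some hc2
      have hnb : ¬ isBox p := by
        rintro ⟨sq, hq⟩
        rw [hn] at hq
        obtain ⟨-, h2⟩ := Prod.mk.inj (Option.some_inj.mp hq)
        exact RuleTag.noConfusion h2
      rw [hsp false _ _ hn1, hsp true _ _ hn2]
      rw [if_neg (by rintro ⟨h', -⟩; exact Bool.noConfusion h'),
        if_neg (by rintro ⟨-, h'⟩; exact hnb h')]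
      have hm2' : 2 ≤ count A Δ' := hm2
      have hmg : A ∈ Δ' := Multiset.one_le_count_iff_mem.mp (by omega)
      have e1 : T (Fml.imp a b ::ₘ Γ', Δ') = (Fml.imp a b ::ₘ Γ', Δ'.erase A) := by
        rw [hT]
      have e2 : T (b ::ₘ Γ', Δ') = (b ::ₘ Γ', Δ'.erase A) := by
        rw [hT]
      have e3 : T (Γ', a ::ₘ Δ') = (Γ', a ::ₘ Δ'.erase A) := by
        rw [hT]; simp only []
        rw [erase_cons_of_mem hmg]
      rw [e1, e2, e3]
      exact Rules.impL false _ _ a b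
    | impR c Γ' Δ' a b =>
      obtain ⟨rc1, hn1⟩ := map_fst_some hc1
      have hn2 : π.node (p ++ [true]) = none := by
        rcases h' : π.node (p ++ [true]) with _ | w
        · rfl
        · rw [h'] at hc2; exact absurd hc2 (by simp)
      rw [hsp false _ _ hn1, hspn true hn2]
      rw [if_neg (by rintro ⟨h', -⟩; exact Bool.noConfusion h')]
      have hmg : A ∈ Δ' := mem_tail_of_two_le (show 2 ≤ count A _ from hm2)
      have e1 : T (Γ', Fml.imp a b ::ₘ Δ') = (Γ', Fml.imp a b ::ₘ Δ'.erase A) := by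
        rw [hT]; simp only []
        rw [erase_cons_of_mem hmg]
      have e2 : T (a ::ₘ Γ', b ::ₘ Δ') = (a ::ₘ Γ', b ::ₘ Δ'.erase A) := by
        rw [hT]; simp only []
        rw [erase_cons_of_mem hmg]
      rw [e1, e2]
      exact Rules.impR false _ _ a b
    | refl c Γ' Δ' b =>
      obtain ⟨rc1, hn1⟩ := map_fst_some hc1
      have hn2 : π.node (p ++ [true]) = none := by
        rcases h' : π.node (p ++ [true]) with _ | w
        · rfl
        · rw [h'] at hc2; exact absurd hc2 (by simp)
      rw [hsp false _ _ hn1, hspn true hn2]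
      rw [if_neg (by rintro ⟨h', -⟩; exact Bool.noConfusion h')]
      have e1 : T (Fml.box b ::ₘ Γ', Δ') = (Fml.box b ::ₘ Γ', Δ'.erase A) := by
        rw [hT]
      have e2 : T (b ::ₘ Fml.box b ::ₘ Γ', Δ')
          = (b ::ₘ Fml.box b ::ₘ Γ', Δ'.erase A) := by
        rw [hT]
      rw [e1, e2]
      exact Rules.refl false _ _ b
    | box c Γ₀ Φ Δ' a =>
      obtain ⟨rc1, hn1⟩ := map_fst_some hc1
      obtain ⟨rc2, hn2⟩ := map_fst_some hc2
      have hb : isBox p := ⟨(Γ₀ + Φ.map Fml.box, Fml.box a ::ₘ Δ'), hn⟩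
      rw [hsp false _ _ hn1, hsp true _ _ hn2]
      rw [if_neg (by rintro ⟨h', -⟩; exact Bool.noConfusion h'), if_pos ⟨rfl, hb⟩]
      have hmg : A ∈ Δ' := mem_tail_of_two_le (show 2 ≤ count A _ from hm2)
      have e1 : T (Γ₀ + Φ.map Fml.box, Fml.box a ::ₘ Δ')
          = (Γ₀ + Φ.map Fml.box, Fml.box a ::ₘ Δ'.erase A) := by
        rw [hT]; simp only []
        rw [erase_cons_of_mem hmg]
      have e2 : T (Γ₀ + Φ.map Fml.box, a ::ₘ Δ')
          = (Γ₀ + Φ.map Fml.box, a ::ₘ Δ'.erase A) := by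
        rw [hT]; simp only []
        rw [erase_cons_of_mem hmg]
      rw [e1, e2]
      exact Rules.box false _ _ _ a

lemma conLR (A : Fml) : ConL A ∧ ConR A := by
  induction A with
  | bot =>
    refine ⟨conL_aux _ ?_, conR_aux _ ?_ ?_⟩ <;> intros <;> simp_all
  | var n =>
    refine ⟨conL_aux _ ?_, conR_aux _ ?_ ?_⟩ <;> intros <;> simp_all
  | imp X Y ihX ihY =>
    refine ⟨conL_aux _ ?_, conR_aux _ ?_ ?_⟩
    · intro X' Y' hXY
      obtain ⟨h1, h2⟩ := Fml.imp.inj hXY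
      exact ⟨h2 ▸ ihY.1, h1 ▸ ihX.2⟩
    · intro X' Y' hXY
      obtain ⟨h1, h2⟩ := Fml.imp.inj hXY
      exact ⟨h1 ▸ ihX.1, h2 ▸ ihY.2⟩
    · intro B' hB
      exact absurd hB (by simp)
  | box B ihB =>
    refine ⟨conL_aux _ ?_, conR_aux _ ?_ ?_⟩
    · intro X' Y' hXY
      exact absurd hXY (by simp)
    · intro X' Y' hXY
      exact absurd hXY (by simp)
    · intro B' hB
      exact (Fml.box.inj hB) ▸ ihB.2

end GrzAux

/-- For any formula `A`, the contraction rules `cl_A` and `cr_A` are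
admissible in `Grz_∞`. -/
theorem contraction_admissible (A : Fml) (Γ Δ : Multiset Fml) :
    (ProvableInf false (A ::ₘ A ::ₘ Γ, Δ) → ProvableInf false (A ::ₘ Γ, Δ)) ∧
    (ProvableInf false (Γ, A ::ₘ A ::ₘ Δ) → ProvableInf false (Γ, A ::ₘ Δ)) := by
  obtain ⟨hL, hR⟩ := GrzAux.conLR A
  exact ⟨hL Γ Δ, hR Γ Δ⟩
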